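/- arXiv:hep-th/0604120 — 3 statements merged into one kernel-verified Lean document; each statement's English description precedes it below -/
import Mathlib

section
/- (Partial-trace characterization of noiseless subsystems.) Let H = (H^A ⊗ H^B) ⊕ K be a finite-dimensional complex Hilbert space decomposition, with H^A = ℂ^A, H^B = ℂ^B and index type (A × B) ⊕ K for H, and let Φ be a quantum channel (completely positive trace-preserving linear map) on the matrix algebra B(H). Then B is noiseless for Φ — i.e. for all operators σ^A on H^A and σ^B on H^B there exists an operator τ^A on H^A with Φ(σ^A ⊗ σ^B) = τ^A ⊗ σ^B (operators on H^A ⊗ H^B being extended to H by zero on K) — if and only if Tr_A ∘ Φ ∘ 𝒫^{AB} = Tr_A ∘ 𝒫^{AB} as maps from B(H) to B(H^B). -/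
open Matrix
open scoped ComplexOrder Kronecker

/-- The tensor extension `id_k ⊗ Φ` of a linear map between matrix algebras, via the
Kronecker-product identification. -/
def tensorExt {ι₁ ι₂ : Type*} [Fintype ι₁] [Fintype ι₂]
    (Φ : Matrix ι₁ ι₁ ℂ →ₗ[ℂ] Matrix ι₂ ι₂ ℂ)
    (k : ℕ) (M : Matrix (Fin k × ι₁) (Fin k × ι₁) ℂ) :
    Matrix (Fin k × ι₂) (Fin k × ι₂) ℂ :=
  Matrix.of fun p q => Φ (Matrix.of fun a b => M (p.1, a) (q.1, b)) p.2 q.2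

/-- Complete positivity of a linear map between matrix algebras. -/
def IsCompletelyPositive {ι₁ ι₂ : Type*} [Fintype ι₁] [Fintype ι₂]
    (Φ : Matrix ι₁ ι₁ ℂ →ₗ[ℂ] Matrix ι₂ ι₂ ℂ) : Prop :=
  ∀ (k : ℕ) (M : Matrix (Fin k × ι₁) (Fin k × ι₁) ℂ),
    M.PosSemidef → (tensorExt Φ k M).PosSemidef

variable {A B K : Type*}

/-- An operator on `H^A ⊗ H^B`, regarded as an operator on `H = (H^A ⊗ H^B) ⊕ K`
that is zero on `K`. -/
def embedAB (M : Matrix (A × B) (A × B) ℂ) :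
    Matrix ((A × B) ⊕ K) ((A × B) ⊕ K) ℂ :=
  Matrix.fromBlocks M 0 0 0

/-- The orthogonal projection `P^{AB}` of `H = (H^A ⊗ H^B) ⊕ K` onto `H^A ⊗ H^B`. -/
def projAB [DecidableEq A] [DecidableEq B] :
    Matrix ((A × B) ⊕ K) ((A × B) ⊕ K) ℂ :=
  Matrix.fromBlocks 1 0 0 0

/-- The partial trace over `A` applied to the `H^A ⊗ H^B` block of an operator on
`H = (H^A ⊗ H^B) ⊕ K`. -/
noncomputable def trA [Fintype A] (M : Matrix ((A × B) ⊕ K) ((A × B) ⊕ K) ℂ) : Matrix B B ℂ :=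
  Matrix.of fun b b' => ∑ a : A, M (Sum.inl (a, b)) (Sum.inl (a, b'))

/-! ### Auxiliary lemmas -/

lemma embedAB_add (M N : Matrix (A × B) (A × B) ℂ) :
    embedAB (K := K) (M + N) = embedAB M + embedAB N := by
  ext (p | x) (q | y) <;> simp [embedAB]

lemma embedAB_smul (c : ℂ) (M : Matrix (A × B) (A × B) ℂ) :
    embedAB (K := K) (c • M) = c • embedAB M := by
  ext (p | x) (q | y) <;> simp [embedAB]

lemma embedAB_zero : embedAB (K := K) (0 : Matrix (A × B) (A × B) ℂ) = 0 := by
  ext (p | x) (q | y) <;> simp [embedAB]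

lemma embedAB_toBlocks (M : Matrix (A × B) (A × B) ℂ) :
    (embedAB (K := K) M).toBlocks₁₁ = M := rfl

/-- `embedAB` as a linear map. -/
def embedL (A B K : Type*) :
    Matrix (A × B) (A × B) ℂ →ₗ[ℂ] Matrix ((A × B) ⊕ K) ((A × B) ⊕ K) ℂ where
  toFun := embedAB
  map_add' := embedAB_add
  map_smul' := embedAB_smul

/-- `trA` as a linear map. -/
noncomputable def trAL (A B K : Type*) [Fintype A] :
    Matrix ((A × B) ⊕ K) ((A × B) ⊕ K) ℂ →ₗ[ℂ] Matrix B B ℂ where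
  toFun := trA
  map_add' M N := by ext b b'; simp [trA, Finset.sum_add_distrib]
  map_smul' c M := by ext b b'; simp [trA, Finset.mul_sum]

/-- Kronecker multiplication on the left by a fixed matrix, as a linear map. -/
def kronL [Fintype A] [Fintype B] (σA : Matrix A A ℂ) :
    Matrix B B ℂ →ₗ[ℂ] Matrix (A × B) (A × B) ℂ where
  toFun σB := σA ⊗ₖ σB
  map_add' σB₁ σB₂ := Matrix.kronecker_add σA σB₁ σB₂
  map_smul' c σB := Matrix.kronecker_smul c σA σB

lemma proj_conj [Fintype A] [Fintype B] [Fintype K] [DecidableEq A] [DecidableEq B]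
    (σ : Matrix ((A × B) ⊕ K) ((A × B) ⊕ K) ℂ) :
    projAB * σ * projAB = embedAB σ.toBlocks₁₁ := by
  nth_rewrite 1 [← Matrix.fromBlocks_toBlocks σ]
  rw [projAB, embedAB, Matrix.fromBlocks_multiply, Matrix.fromBlocks_multiply]
  simp

lemma trace_embedAB [Fintype A] [Fintype B] [Fintype K] (M : Matrix (A × B) (A × B) ℂ) :
    (embedAB (K := K) M).trace = M.trace := by
  simp [embedAB, Matrix.trace, Matrix.diag, Fintype.sum_sum_type]

lemma trA_embed_kron [Fintype A] (σA : Matrix A A ℂ) (σB : Matrix B B ℂ) :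
    trA (K := K) (embedAB (σA ⊗ₖ σB)) = σA.trace • σB := by
  ext b b'
  simp [trA, embedAB, Matrix.trace, Matrix.diag, Matrix.smul_apply, smul_eq_mul,
    ← Finset.sum_mul]

lemma stdBasis_kron [DecidableEq A] [DecidableEq B] (a a' : A) (b b' : B) :
    Matrix.single ((a, b) : A × B) (a', b') (1 : ℂ) =
      Matrix.single a a' 1 ⊗ₖ Matrix.single b b' 1 := by
  ext ⟨x, y⟩ ⟨x', y'⟩
  simp only [Matrix.single, Matrix.kroneckerMap_apply, Matrix.of_apply, Prod.mk.injEq]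
  split_ifs <;> simp_all

lemma outer_posSemidef {n : Type*} [Fintype n] (v : n → ℂ) :
    (Matrix.of fun i j => v i * (starRingEnd ℂ) (v j)).PosSemidef := by
  have h := Matrix.posSemidef_self_mul_conjTranspose (Matrix.of fun (i : n) (_ : Fin 1) => v i)
  have he : (Matrix.of fun i j => v i * (starRingEnd ℂ) (v j)) =
      (Matrix.of fun (i : n) (_ : Fin 1) => v i) * (Matrix.of fun (i : n) (_ : Fin 1) => v i)ᴴ := by
    ext i j
    simp [Matrix.mul_apply, Matrix.conjTranspose_apply, Complex.star_def]
  rw [he]; exact h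

lemma gram_apply {J n : Type*} [Fintype J] (N : Matrix J n ℂ) (p q : n) :
    (Nᴴ * N) p q = ∑ j, (starRingEnd ℂ) (N j p) * N j q := by
  simp [Matrix.mul_apply, Matrix.conjTranspose_apply, Complex.star_def]

lemma gram_diff {J n : Type*} [Fintype J] (N : Matrix J n ℂ) (p q : n) :
    ∑ j, (starRingEnd ℂ) (N j p - N j q) * (N j p - N j q)
      = (Nᴴ * N) p p - (Nᴴ * N) p q - ((Nᴴ * N) q p - (Nᴴ * N) q q) := by
  simp only [_root_.gram_apply, map_sub, sub_mul, mul_sub, Finset.sum_sub_distrib]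
  ring

/-- If a finite sum of `conj z * z` terms vanishes, every term vanishes. -/
lemma sum_conj_mul_self_eq_zero {ι J : Type*} [Fintype ι] [Fintype J] (f : ι → J → ℂ)
    (h : ∑ i, ∑ j, (starRingEnd ℂ) (f i j) * f i j = 0) : ∀ i j, f i j = 0 := by
  have h' : ∑ i, ∑ j, Complex.normSq (f i j) = 0 := by
    have : ((∑ i, ∑ j, Complex.normSq (f i j) : ℝ) : ℂ) = 0 := by
      push_cast
      simpa [Complex.normSq_eq_conj_mul_self] using h
    exact_mod_cast this
  intro i j
  have h1 := (Finset.sum_eq_zero_iff_of_nonneg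
    (fun i _ => Finset.sum_nonneg fun j _ => Complex.normSq_nonneg (f i j))).mp h' i
    (Finset.mem_univ i)
  have h2 := (Finset.sum_eq_zero_iff_of_nonneg
    (fun j _ => Complex.normSq_nonneg (f i j))).mp h1 j (Finset.mem_univ j)
  exact Complex.normSq_eq_zero.mp h2

lemma stdBasisMatrix_diag_outer {A : Type*} [DecidableEq A] (x : A) :
    Matrix.single x x (1 : ℂ) = Matrix.of fun i j =>
      (if i = x then (1 : ℂ) else 0) * (starRingEnd ℂ) (if j = x then (1 : ℂ) else 0) := by
  ext i j
  by_cases h1 : i = x <;> by_cases h2 : j = x <;>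
    simp [Matrix.single, h1, h2, eq_comm] <;>
    simp [Ne.symm h1, Ne.symm h2]

lemma stdBasisMatrix_combo {A : Type*} [DecidableEq A] (a a' : A) (hne : a ≠ a') :
    Matrix.single a a' (1 : ℂ)
      = (1/2 : ℂ) • (Matrix.of fun i j =>
            ((if i = a then (1:ℂ) else 0) + (if i = a' then 1 else 0))
              * (starRingEnd ℂ) ((if j = a then (1:ℂ) else 0) + (if j = a' then 1 else 0)))
        + (Complex.I/2) • (Matrix.of fun i j =>
            ((if i = a then (1:ℂ) else 0) + (if i = a' then Complex.I else 0))
              * (starRingEnd ℂ) ((if j = a then (1:ℂ) else 0) + (if j = a' then Complex.I else 0)))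
        - ((1 + Complex.I)/2) • Matrix.single a a 1
        - ((1 + Complex.I)/2) • Matrix.single a' a' 1 := by
  have hne' : a' ≠ a := Ne.symm hne
  ext i j
  simp only [Matrix.single, Matrix.of_apply, Matrix.sub_apply, Matrix.add_apply,
    Matrix.smul_apply, smul_eq_mul, map_add]
  split_ifs <;> subst_vars <;>
    first
      | (exact absurd rfl hne)
      | (exact absurd rfl hne')
      | tauto
      | norm_num [Complex.ext_iff, map_add, _root_.map_one, _root_.map_zero, Complex.conj_I]

/-- Forward direction auxiliary: from noiselessness and trace preservation, the output
`τ` for a standard-basis `σB` can be chosen with `τ.trace = σA.trace`. -/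
lemma tau_trace_eq [Fintype A] [Fintype B] [Fintype K] [DecidableEq B]
    (Φ : Matrix ((A × B) ⊕ K) ((A × B) ⊕ K) ℂ →ₗ[ℂ] Matrix ((A × B) ⊕ K) ((A × B) ⊕ K) ℂ)
    (hTP : ∀ ρ, (Φ ρ).trace = ρ.trace)
    (hN : ∀ (σA : Matrix A A ℂ) (σB : Matrix B B ℂ), ∃ τA,
      Φ (embedAB (σA ⊗ₖ σB)) = embedAB (τA ⊗ₖ σB))
    (σA : Matrix A A ℂ) (b b' : B) :
    ∃ τ : Matrix A A ℂ,
      Φ (embedAB (σA ⊗ₖ Matrix.single b b' 1))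
        = embedAB (τ ⊗ₖ Matrix.single b b' 1) ∧ τ.trace = σA.trace := by
  have key : ∀ (c : B) (τ : Matrix A A ℂ),
      Φ (embedAB (σA ⊗ₖ Matrix.single c c 1))
        = embedAB (τ ⊗ₖ Matrix.single c c 1) → τ.trace = σA.trace := by
    intro c τ h
    have h2 := hTP (embedAB (σA ⊗ₖ Matrix.single c c 1))
    rw [h] at h2
    simpa [trace_embedAB, Matrix.trace_kronecker] using h2
  by_cases hbb : b = b'
  · subst hbb
    obtain ⟨τ, hτ⟩ := hN σA (Matrix.single b b 1)
    exact ⟨τ, hτ, key b τ hτ⟩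
  · obtain ⟨τ₁, h₁⟩ := hN σA (Matrix.single b b' 1)
    obtain ⟨τ₂, h₂⟩ := hN σA (Matrix.single b b 1)
    obtain ⟨τ₃, h₃⟩ := hN σA (Matrix.single b b' 1 + Matrix.single b b 1)
    have hadd : embedAB (K := K)
        (τ₃ ⊗ₖ (Matrix.single b b' 1 + Matrix.single b b 1))
        = embedAB (τ₁ ⊗ₖ Matrix.single b b' 1)
          + embedAB (τ₂ ⊗ₖ Matrix.single b b 1) := by
      rw [← h₁, ← h₂, ← h₃, ← map_add]
      congr 1
      rw [← embedAB_add, ← Matrix.kronecker_add]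
    have h13 : τ₁ = τ₃ := by
      ext x y
      have h := congrArg (fun M => M (Sum.inl (x, b)) (Sum.inl (y, b'))) hadd
      simpa [embedAB, Matrix.single, hbb, Ne.symm hbb] using h.symm
    have h23 : τ₂ = τ₃ := by
      ext x y
      have h := congrArg (fun M => M (Sum.inl (x, b)) (Sum.inl (y, b))) hadd
      simpa [embedAB, Matrix.single, hbb, Ne.symm hbb] using h.symm
    refine ⟨τ₁, h₁, ?_⟩
    rw [h13, ← h23]
    exact key b τ₂ h₂

lemma posSemidef_exists_eq_conjTranspose_mul_self {n : Type*} [Fintype n] [DecidableEq n]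
    {M : Matrix n n ℂ} (h : M.PosSemidef) : ∃ B : Matrix n n ℂ, M = Bᴴ * B := by
  open scoped MatrixOrder Matrix.Norms.L2Operator in
  obtain ⟨B, hB⟩ := CStarAlgebra.nonneg_iff_eq_star_mul_self.mp h.nonneg
  exact ⟨B, hB⟩

/-- Reverse direction core: complete positivity + trace preservation + the partial-trace
identity give noiselessness on positive semidefinite `σA` and standard-basis `σB`,
with a single `τ` working for all standard-basis matrices. -/
lemma reverse_core
    [Fintype A] [Fintype B] [Fintype K] [DecidableEq A] [DecidableEq B] [DecidableEq K]
    [Nonempty B]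
    (Φ : Matrix ((A × B) ⊕ K) ((A × B) ⊕ K) ℂ →ₗ[ℂ] Matrix ((A × B) ⊕ K) ((A × B) ⊕ K) ℂ)
    (hCP : IsCompletelyPositive Φ)
    (hTP : ∀ ρ, (Φ ρ).trace = ρ.trace)
    (hPT : ∀ M : Matrix (A × B) (A × B) ℂ,
      trA (Φ (embedAB (K := K) M)) = trA (embedAB (K := K) M))
    (σA : Matrix A A ℂ) (hσA : σA.PosSemidef) :
    ∃ τ : Matrix A A ℂ, ∀ c c' : B,
      Φ (embedAB (σA ⊗ₖ Matrix.single c c' 1))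
        = embedAB (τ ⊗ₖ Matrix.single c c' 1) := by
  classical
  obtain ⟨R, hR⟩ := posSemidef_exists_eq_conjTranspose_mul_self hσA
  set k := Fintype.card B with hk
  set e : Fin k ≃ B := (Fintype.equivFin B).symm with he
  set F : B → B → Matrix ((A × B) ⊕ K) ((A × B) ⊕ K) ℂ :=
    fun c c' => Φ (embedAB (σA ⊗ₖ Matrix.single c c' 1)) with hFdef
  -- consequences of the partial-trace hypothesis and trace preservation
  have htrF : ∀ (c c' b b' : B),
      (∑ a : A, F c c' (Sum.inl (a, b)) (Sum.inl (a, b')))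
        = σA.trace * Matrix.single c c' (1 : ℂ) b b' := by
    intro c c' b b'
    have h := hPT (σA ⊗ₖ Matrix.single c c' 1)
    rw [trA_embed_kron] at h
    have h2 := congrArg (fun M => M b b') h
    simpa [trA, smul_eq_mul] using h2
  have htraceF : ∀ c : B, (F c c).trace = σA.trace := by
    intro c
    have h := hTP (embedAB (σA ⊗ₖ Matrix.single c c 1))
    simpa [trace_embedAB, Matrix.trace_kronecker] using h
  -- the PSD test matrix
  set G : Matrix A (Fin k × ((A × B) ⊕ K)) ℂ :=
    Matrix.of fun j p =>
      Sum.elim (fun ab => R j ab.1 * (if ab.2 = e p.1 then 1 else 0)) (fun _ => 0) p.2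
    with hGdef
  have hσentry : ∀ a a' : A, σA a a' = ∑ j, (starRingEnd ℂ) (R j a) * R j a' := by
    intro a a'
    rw [hR]
    simp [Matrix.mul_apply, Matrix.conjTranspose_apply, Complex.star_def]
  have hGl : ∀ (j : A) (d : Fin k) (p : A × B),
      G j (d, Sum.inl p) = R j p.1 * (if p.2 = e d then 1 else 0) := by
    intro j d p; rw [hGdef]; rfl
  have hGr : ∀ (j : A) (d : Fin k) (y : K), G j (d, Sum.inr y) = 0 := by
    intro j d y; rw [hGdef]; rfl
  have hXb : ∀ c c' : Fin k,
      (Matrix.of fun z z' => (Gᴴ * G) (c, z) (c', z'))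
        = embedAB (σA ⊗ₖ Matrix.single (e c) (e c') 1) := by
    intro c c'
    ext (⟨a, b⟩ | x) (⟨a', b'⟩ | y)
    · rw [Matrix.of_apply, _root_.gram_apply G]
      simp only [hGl]
      rcases eq_or_ne b (e c) with h1 | h1
      · rcases eq_or_ne b' (e c') with h2 | h2
        · subst h1; subst h2
          simp [embedAB, Matrix.kroneckerMap_apply, Matrix.single, ← hσentry]
        · subst h1
          simp [embedAB, Matrix.kroneckerMap_apply, Matrix.single, h2, Ne.symm h2]
      · simp [embedAB, Matrix.kroneckerMap_apply, Matrix.single, h1, Ne.symm h1]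
    · rw [Matrix.of_apply, _root_.gram_apply G]
      simp [hGl, hGr, embedAB]
    · rw [Matrix.of_apply, _root_.gram_apply G]
      simp [hGl, hGr, embedAB]
    · rw [Matrix.of_apply, _root_.gram_apply G]
      simp [hGl, hGr, embedAB]
  have hX : (Gᴴ * G).PosSemidef := Matrix.posSemidef_conjTranspose_mul_self G
  have hY : (tensorExt Φ k (Gᴴ * G)).PosSemidef := hCP k _ hX
  set Y := tensorExt Φ k (Gᴴ * G) with hYdef
  obtain ⟨N, hN⟩ := posSemidef_exists_eq_conjTranspose_mul_self hY
  have hYapp : ∀ (c c' : Fin k) (z z' : (A × B) ⊕ K),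
      Y (c, z) (c', z') = F (e c) (e c') z z' := by
    intro c c' z z'
    show Φ (Matrix.of fun w w' => (Gᴴ * G) (c, w) (c', w')) z z' = _
    rw [hXb]
  have hYN : ∀ p q, Y p q = ∑ j, (starRingEnd ℂ) (N j p) * N j q := by
    intro p q
    rw [hN]; exact _root_.gram_apply N p q
  -- support: `N` columns vanish outside the "diagonal" indices
  have hNzB : ∀ (c : Fin k) (b : B), b ≠ e c → ∀ (a : A) j, N j (c, Sum.inl (a, b)) = 0 := by
    intro c b hb
    have hsum : ∑ a : A, ∑ j, (starRingEnd ℂ) (N j (c, Sum.inl (a, b)))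
        * N j (c, Sum.inl (a, b)) = 0 := by
      have h1 : ∑ a : A, Y (c, Sum.inl (a, b)) (c, Sum.inl (a, b)) = 0 := by
        simp_rw [hYapp]
        rw [htrF (e c) (e c) b b]
        simp [Matrix.single, Ne.symm hb]
      simp_rw [← hYN]
      exact h1
    intro a j
    exact sum_conj_mul_self_eq_zero (fun a j => N j (c, Sum.inl (a, b))) hsum a j
  have hNzK : ∀ (c : Fin k) (x : K) j, N j (c, Sum.inr x) = 0 := by
    intro c
    have hdiag : ∑ p : A × B, F (e c) (e c) (Sum.inl p) (Sum.inl p) = σA.trace := by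
      rw [Fintype.sum_prod_type_right]
      simp_rw [htrF]
      simp [Matrix.single]
    have h1 : ∑ x : K, Y (c, Sum.inr x) (c, Sum.inr x) = 0 := by
      have ht := htraceF (e c)
      rw [Matrix.trace] at ht
      rw [Fintype.sum_sum_type] at ht
      simp only [Matrix.diag_apply] at ht
      simp_rw [hYapp]
      linear_combination ht - hdiag
    have hsum : ∑ x : K, ∑ j, (starRingEnd ℂ) (N j (c, Sum.inr x)) * N j (c, Sum.inr x) = 0 := by
      simp_rw [← hYN]
      exact h1
    intro x j
    exact sum_conj_mul_self_eq_zero (fun x j => N j (c, Sum.inr x)) hsum x j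
  -- the diagonal columns are all equal
  have hcol : ∀ (c c' : Fin k) (a : A) j,
      N j (c, Sum.inl (a, e c)) = N j (c', Sum.inl (a, e c')) := by
    intro c c'
    have hYsum : ∀ d d' : Fin k,
        ∑ a : A, Y (d, Sum.inl (a, e d)) (d', Sum.inl (a, e d')) = σA.trace := by
      intro d d'
      simp_rw [hYapp]
      rw [htrF (e d) (e d') (e d) (e d')]
      simp [Matrix.single]
    have hsum : ∑ a : A, ∑ j, (starRingEnd ℂ)
        (N j (c, Sum.inl (a, e c)) - N j (c', Sum.inl (a, e c')))
        * (N j (c, Sum.inl (a, e c)) - N j (c', Sum.inl (a, e c'))) = 0 := by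
      have hexp : ∀ a : A, (∑ j, (starRingEnd ℂ)
          (N j (c, Sum.inl (a, e c)) - N j (c', Sum.inl (a, e c')))
          * (N j (c, Sum.inl (a, e c)) - N j (c', Sum.inl (a, e c'))))
          = Y (c, Sum.inl (a, e c)) (c, Sum.inl (a, e c))
            - Y (c, Sum.inl (a, e c)) (c', Sum.inl (a, e c'))
            - (Y (c', Sum.inl (a, e c')) (c, Sum.inl (a, e c))
              - Y (c', Sum.inl (a, e c')) (c', Sum.inl (a, e c'))) := by
        intro a
        have h := gram_diff N (c, Sum.inl (a, e c)) (c', Sum.inl (a, e c'))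
        rw [← hN] at h
        exact h
      simp_rw [hexp]
      rw [Finset.sum_sub_distrib, Finset.sum_sub_distrib, Finset.sum_sub_distrib,
        hYsum c c, hYsum c c', hYsum c' c, hYsum c' c']
      ring
    intro a j
    have := sum_conj_mul_self_eq_zero
      (fun a j => N j (c, Sum.inl (a, e c)) - N j (c', Sum.inl (a, e c'))) hsum a j
    exact sub_eq_zero.mp this
  -- define τ and conclude
  obtain ⟨c₀⟩ := ‹Nonempty B›
  refine ⟨Matrix.of fun a a' =>
    Y (e.symm c₀, Sum.inl (a, c₀)) (e.symm c₀, Sum.inl (a', c₀)), fun c c' => ?_⟩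
  have hFY : ∀ z z', F c c' z z' = Y (e.symm c, z) (e.symm c', z') := by
    intro z z'
    rw [hYapp]
    simp
  show F c c' = _
  ext (⟨a, b⟩ | x) (⟨a', b'⟩ | y)
  · rw [hFY, hYN]
    rcases eq_or_ne b c with h1 | h1
    · rcases eq_or_ne b' c' with h2 | h2
      · subst h1; subst h2
        have e1 : ∀ j, N j (e.symm b, Sum.inl (a, b)) = N j (e.symm c₀, Sum.inl (a, c₀)) := by
          intro j
          have h := hcol (e.symm b) (e.symm c₀) a j
          simpa using h
        have e2 : ∀ j, N j (e.symm b', Sum.inl (a', b')) = N j (e.symm c₀, Sum.inl (a', c₀)) := by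
          intro j
          have h := hcol (e.symm b') (e.symm c₀) a' j
          simpa using h
        simp_rw [e1, e2]
        rw [← hYN]
        simp [embedAB, Matrix.kroneckerMap_apply, Matrix.single]
      · have hz : ∀ j, N j (e.symm c', Sum.inl (a', b')) = 0 := by
          intro j
          exact hNzB (e.symm c') b' (by simpa using (Ne.symm (Ne.symm h2))) a' j
        simp [hz, embedAB, Matrix.kroneckerMap_apply, Matrix.single, Ne.symm h2]
    · have hz : ∀ j, N j (e.symm c, Sum.inl (a, b)) = 0 := by
        intro j
        exact hNzB (e.symm c) b (by simpa using h1) a j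
      simp [hz, embedAB, Matrix.kroneckerMap_apply, Matrix.single, Ne.symm h1]
  · rw [hFY, hYN]
    simp [hNzK, embedAB]
  · rw [hFY, hYN]
    simp [hNzK, embedAB]
  · rw [hFY, hYN]
    simp [hNzK, embedAB]

/-- **Partial-trace characterization of noiseless subsystems.**  For a quantum channel
`Φ` on `B(H)`, `H = (H^A ⊗ H^B) ⊕ K`, the subsystem `B` is noiseless for `Φ` iff
`Tr_A ∘ Φ ∘ 𝒫^{AB} = Tr_A ∘ 𝒫^{AB}`. -/
theorem noiseless_iff_partialTrace
    [Fintype A] [Fintype B] [Fintype K] [DecidableEq A] [DecidableEq B] [DecidableEq K]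
    (Φ : Matrix ((A × B) ⊕ K) ((A × B) ⊕ K) ℂ →ₗ[ℂ] Matrix ((A × B) ⊕ K) ((A × B) ⊕ K) ℂ)
    (hCP : IsCompletelyPositive Φ)
    (hTP : ∀ ρ, (Φ ρ).trace = ρ.trace) :
    (∀ (σA : Matrix A A ℂ) (σB : Matrix B B ℂ), ∃ τA : Matrix A A ℂ,
        Φ (embedAB (σA ⊗ₖ σB)) = embedAB (τA ⊗ₖ σB)) ↔
      (∀ σ : Matrix ((A × B) ⊕ K) ((A × B) ⊕ K) ℂ,
        trA (Φ (projAB * σ * projAB)) = trA (projAB * σ * projAB)) := by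
  constructor
  · -- forward direction
    intro hN σ
    rw [proj_conj]
    have hmap : (trAL A B K) ∘ₗ (Φ ∘ₗ (embedL A B K)) = (trAL A B K) ∘ₗ (embedL A B K) := by
      apply Module.Basis.ext (Matrix.stdBasis ℂ (A × B) (A × B))
      rintro ⟨⟨a, b⟩, a', b'⟩
      obtain ⟨τ, hτ, htr⟩ := tau_trace_eq Φ hTP hN (Matrix.single a a' 1) b b'
      simp only [LinearMap.comp_apply, Matrix.stdBasis_eq_single, stdBasis_kron]
      show trA (Φ (embedAB (K := K) (Matrix.single a a' 1 ⊗ₖ Matrix.single b b' 1)))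
        = trA (embedAB (K := K) (Matrix.single a a' 1 ⊗ₖ Matrix.single b b' 1))
      rw [hτ, trA_embed_kron, trA_embed_kron, htr]
    have h := LinearMap.congr_fun hmap σ.toBlocks₁₁
    exact h
  · -- reverse direction
    intro hPTraw
    have hPT : ∀ M : Matrix (A × B) (A × B) ℂ,
        trA (Φ (embedAB (K := K) M)) = trA (embedAB (K := K) M) := by
      intro M
      have h := hPTraw (embedAB M)
      rwa [proj_conj, embedAB_toBlocks] at h
    rcases isEmpty_or_nonempty B with hB | hB
    · -- degenerate case: B empty, everything vanishes
      intro σA σB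
      refine ⟨0, ?_⟩
      have h0 : ∀ M : Matrix (A × B) (A × B) ℂ, embedAB (K := K) M = 0 := by
        intro M
        ext z w
        rcases z with ⟨a, b⟩ | x
        · exact (IsEmpty.false b).elim
        rcases w with ⟨a', b'⟩ | y
        · exact (IsEmpty.false b').elim
        simp [embedAB]
      rw [h0, h0, map_zero]
    · -- main case
      have hPSD : ∀ σA : Matrix A A ℂ, σA.PosSemidef → ∃ τ : Matrix A A ℂ,
          ∀ σB : Matrix B B ℂ, Φ (embedAB (σA ⊗ₖ σB)) = embedAB (τ ⊗ₖ σB) := by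
        intro σA hσA
        obtain ⟨τ, hτ⟩ := reverse_core Φ hCP hTP hPT σA hσA
        refine ⟨τ, ?_⟩
        have hmaps : Φ ∘ₗ (embedL A B K) ∘ₗ kronL σA = (embedL A B K) ∘ₗ kronL τ := by
          apply Module.Basis.ext (Matrix.stdBasis ℂ B B)
          rintro ⟨c, c'⟩
          simp only [LinearMap.comp_apply, Matrix.stdBasis_eq_single]
          exact hτ c c'
        intro σB
        exact LinearMap.congr_fun hmaps σB
      -- the set of good σA is a submodule containing all PSD matrices, hence everything
      set S : Submodule ℂ (Matrix A A ℂ) :=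
        { carrier := {σ | ∃ τ, ∀ σB : Matrix B B ℂ,
            Φ (embedAB (σ ⊗ₖ σB)) = embedAB (τ ⊗ₖ σB)}
          add_mem' := by
            rintro x y ⟨τ₁, h₁⟩ ⟨τ₂, h₂⟩
            exact ⟨τ₁ + τ₂, fun σB => by
              rw [Matrix.add_kronecker, embedAB_add, map_add, h₁ σB, h₂ σB,
                ← embedAB_add, ← Matrix.add_kronecker]⟩
          zero_mem' := ⟨0, fun σB => by
            simp [Matrix.zero_kronecker, embedAB_zero]⟩
          smul_mem' := by
            rintro c x ⟨τ, h⟩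
            exact ⟨c • τ, fun σB => by
              rw [Matrix.smul_kronecker, embedAB_smul, LinearMap.map_smul, h σB,
                ← embedAB_smul, ← Matrix.smul_kronecker]⟩ } with hSdef
      have hPSDmem : ∀ σ : Matrix A A ℂ, σ.PosSemidef → σ ∈ S := fun σ h => hPSD σ h
      have hdiagS : ∀ x : A, Matrix.single x x (1 : ℂ) ∈ S := by
        intro x
        apply hPSDmem
        rw [stdBasisMatrix_diag_outer]
        exact outer_posSemidef (fun i => if i = x then (1 : ℂ) else 0)
      have hstdS : ∀ a a' : A, Matrix.single a a' (1 : ℂ) ∈ S := by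
        intro a a'
        rcases eq_or_ne a a' with rfl | hne
        · exact hdiagS a
        · have hP1 : (Matrix.of fun i j =>
              ((if i = a then (1:ℂ) else 0) + (if i = a' then 1 else 0))
                * (starRingEnd ℂ)
                  ((if j = a then (1:ℂ) else 0) + (if j = a' then 1 else 0))) ∈ S :=
            hPSDmem _ (outer_posSemidef _)
          have hP2 : (Matrix.of fun i j =>
              ((if i = a then (1:ℂ) else 0) + (if i = a' then Complex.I else 0))
                * (starRingEnd ℂ)
                  ((if j = a then (1:ℂ) else 0) + (if j = a' then Complex.I else 0))) ∈ S :=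
            hPSDmem _ (outer_posSemidef _)
          rw [stdBasisMatrix_combo a a' hne]
          exact Submodule.sub_mem _ (Submodule.sub_mem _
            (Submodule.add_mem _ (Submodule.smul_mem _ _ hP1) (Submodule.smul_mem _ _ hP2))
            (Submodule.smul_mem _ _ (hdiagS a))) (Submodule.smul_mem _ _ (hdiagS a'))
      intro σA
      have hmem : σA ∈ S := by
        have hdecomp : σA = ∑ i : A, ∑ j : A, σA i j • Matrix.single i j (1 : ℂ) := by
          nth_rewrite 1 [Matrix.matrix_eq_sum_single σA]
          refine Finset.sum_congr rfl fun i _ => Finset.sum_congr rfl fun j _ => ?_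
          ext x y
          simp only [Matrix.single, Matrix.of_apply, Matrix.smul_apply, smul_eq_mul]
          split_ifs <;> simp
        rw [hdecomp]
        exact Submodule.sum_mem _ fun i _ => Submodule.sum_mem _ fun j _ =>
          Submodule.smul_mem _ _ (hstdS i j)
      obtain ⟨τ, hτ⟩ := hmem
      exact fun σB => ⟨τ, hτ σB⟩
end

section
/- (Theorem on group-invariant subsystems, equivalence of conditions 1 and 4.) Let G be a group with a unitary representation π : G → U(H^B) on the finite-dimensional Hilbert space H^B = ℂ^B, let H = (H^A ⊗ H^B) ⊕ K with H^A = ℂ^A, and let Φ be a quantum channel on B(H) given in operator-sum form Φ(ρ) = Σ_a E_a ρ E_a†. Let {|α_k⟩} be an orthonormal basis for H^A and let P_{kl} = |α_k⟩⟨α_l| ⊗ 1^B be the corresponding matrix units, regarded as operators on H that are zero on K. Then B is group invariant under Φ — i.e. there exists U ∈ π(G) such that for all operators σ^A on H^A and σ^B on H^B there is an operator τ^A on H^A with Φ(σ^A ⊗ σ^B) = τ^A ⊗ U σ^B U† — if and only if there exists U ∈ π(G) and a set of complex scalars {λ_{akl}} such that P_{kk} (1^A ⊗ U†) E_a P_{ll}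 = λ_{akl} P_{kl} for all a, k, l, and (1^A ⊗ U†) E_a P^{AB} = P^{AB} (1^A ⊗ U†) E_a P^{AB} for all a. -/
open Matrix
open scoped ComplexOrder Kronecker

variable {A B K : Type*}

/-- For a unitary `U` on `H^B`, the operator on `H = (H^A ⊗ H^B) ⊕ K` acting as the
Kronecker product `1^A ⊗ U` on the summand `H^A ⊗ H^B` and as the identity on `K`. -/
def oneTensor [Fintype A] [DecidableEq A] [DecidableEq B] [DecidableEq K]
    (U : Matrix B B ℂ) : Matrix ((A × B) ⊕ K) ((A × B) ⊕ K) ℂ :=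
  Matrix.fromBlocks ((1 : Matrix A A ℂ) ⊗ₖ U) 0 0 (1 : Matrix K K ℂ)

/-! ### Auxiliary lemmas -/

set_option linter.unusedSectionVars false

namespace GIS

/-- The elementary tensor `x ⊗ ψ`, regarded as a vector in `(H^A ⊗ H^B) ⊕ K`. -/
def zvec {A B K : Type*} (x : A → ℂ) (ψ : B → ℂ) : (A × B) ⊕ K → ℂ :=
  Sum.elim (fun p => x p.1 * ψ p.2) 0

section Vec
variable {n : Type*} [Fintype n]

lemma vecMulVec_mul_vecMulVec (x y z w : n → ℂ) :
    vecMulVec x y * vecMulVec z w = (y ⬝ᵥ z) • vecMulVec x w := by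
  ext i j
  simp [Matrix.mul_apply, vecMulVec_apply, dotProduct, Finset.sum_mul, Finset.mul_sum]
  exact Finset.sum_congr rfl fun k _ => by ring

lemma dotProduct_sum' {ι : Type*} (s : Finset ι) (y : n → ℂ) (f : ι → n → ℂ) :
    y ⬝ᵥ (∑ a ∈ s, f a) = ∑ a ∈ s, y ⬝ᵥ f a := by
  simp only [dotProduct, Finset.sum_apply, Finset.mul_sum]
  exact Finset.sum_comm

lemma sum_mulVec' {ι : Type*} (s : Finset ι) (f : ι → Matrix n n ℂ) (y : n → ℂ) :
    (∑ a ∈ s, f a).mulVec y = ∑ a ∈ s, (f a).mulVec y := by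
  ext i
  simp only [mulVec, dotProduct, Matrix.sum_apply, Finset.sum_apply, Finset.sum_mul]
  exact Finset.sum_comm

lemma vecMulVec_mulVec' (u w y : n → ℂ) : (vecMulVec u w).mulVec y = (w ⬝ᵥ y) • u := by
  ext i
  simp only [mulVec, dotProduct, vecMulVec_apply, Pi.smul_apply, smul_eq_mul, Finset.sum_mul,
    Finset.mul_sum]
  exact Finset.sum_congr rfl fun k _ => by ring

lemma star_dot_comm (x y : n → ℂ) : star (star x ⬝ᵥ y) = star y ⬝ᵥ x := by
  simp only [dotProduct, star_sum, star_mul', star_star, Pi.star_apply]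
  exact Finset.sum_congr rfl fun k _ => by ring

lemma mul_vecMulVec (M : Matrix n n ℂ) (u w : n → ℂ) :
    M * vecMulVec u w = vecMulVec (M.mulVec u) w := by
  ext i j
  simp only [Matrix.mul_apply, vecMulVec_apply, mulVec, dotProduct, Finset.sum_mul]
  exact Finset.sum_congr rfl fun k _ => by ring

lemma vv_mul_mat_mul_vv (x y z w : n → ℂ) (M : Matrix n n ℂ) :
    vecMulVec x y * M * vecMulVec z w = (y ⬝ᵥ M.mulVec z) • vecMulVec x w := by
  rw [mul_assoc, mul_vecMulVec, vecMulVec_mul_vecMulVec]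

lemma vv_conjTranspose (x y : n → ℂ) :
    (vecMulVec x (star y))ᴴ = vecMulVec y (star x) := by
  ext i j
  simp [conjTranspose_apply, vecMulVec_apply, star_mul', mul_comm]

lemma vecMulVec_mul (x y : n → ℂ) (N : Matrix n n ℂ) :
    vecMulVec x y * N = vecMulVec x (Matrix.vecMul y N) := by
  ext i j
  simp only [Matrix.mul_apply, vecMulVec_apply, Matrix.vecMul, dotProduct, Finset.mul_sum]
  exact Finset.sum_congr rfl fun k _ => by ring

lemma star_vecMul_conjTranspose (u : n → ℂ) (M : Matrix n n ℂ) :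
    Matrix.vecMul (star u) Mᴴ = star (M.mulVec u) := by
  funext j
  simp only [Matrix.vecMul, mulVec, dotProduct, conjTranspose_apply, Pi.star_apply, star_sum,
    star_mul']
  exact Finset.sum_congr rfl fun k _ => by ring

lemma mul_vecMulVec_star_mul_conjTranspose (M : Matrix n n ℂ) (u : n → ℂ) :
    M * vecMulVec u (star u) * Mᴴ = vecMulVec (M.mulVec u) (star (M.mulVec u)) := by
  rw [mul_vecMulVec, vecMulVec_mul, star_vecMul_conjTranspose]

/-- support lemma: if `∑ a, x_a x_a† = M` and the quadratic form of `M` at `y` vanishes,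
then each `x_a` is orthogonal to `y`. -/
lemma support_lemma {ι : Type*} [Fintype ι] (x : ι → n → ℂ) (M : Matrix n n ℂ)
    (h : ∑ a, vecMulVec (x a) (star (x a)) = M) (y : n → ℂ)
    (hy : star y ⬝ᵥ M.mulVec y = 0) : ∀ a, star (x a) ⬝ᵥ y = 0 := by
  have key : star y ⬝ᵥ M.mulVec y = ∑ a, star (star (x a) ⬝ᵥ y) * (star (x a) ⬝ᵥ y) := by
    rw [← h, sum_mulVec', dotProduct_sum']
    refine Finset.sum_congr rfl fun a _ => ?_
    rw [vecMulVec_mulVec', dotProduct_smul, star_dot_comm, smul_eq_mul, mul_comm]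
  rw [key] at hy
  intro a
  have h3 := (Finset.sum_eq_zero_iff_of_nonneg
    (fun a _ => star_mul_self_nonneg (star (x a) ⬝ᵥ y))).1 hy a (Finset.mem_univ a)
  rcases mul_eq_zero.1 h3 with h4 | h4
  · exact star_eq_zero.1 h4
  · exact h4

lemma eq_smul_of_orthogonal (ψ u : n → ℂ) (hψ : star ψ ⬝ᵥ ψ ≠ 0)
    (h : ∀ φ : n → ℂ, star ψ ⬝ᵥ φ = 0 → star u ⬝ᵥ φ = 0) :
    u = ((star ψ ⬝ᵥ u) / (star ψ ⬝ᵥ ψ)) • ψ := by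
  set c : ℂ := (star ψ ⬝ᵥ u) / (star ψ ⬝ᵥ ψ) with hc
  set φ : n → ℂ := u - c • ψ with hφ
  have hψφ : star ψ ⬝ᵥ φ = 0 := by
    simp only [hφ, dotProduct_sub, dotProduct_smul, smul_eq_mul, hc]
    field_simp
    ring
  have h1 : star u ⬝ᵥ φ = 0 := h φ hψφ
  have h2 : star φ ⬝ᵥ φ = 0 := by
    have heq : star φ ⬝ᵥ φ = star u ⬝ᵥ φ - star c * (star ψ ⬝ᵥ φ) := by
      simp only [hφ, sub_dotProduct, star_sub, star_smul, smul_dotProduct, smul_eq_mul,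
        dotProduct_sub]
      ring
    rw [heq, h1, hψφ]; ring
  have h0 : φ = 0 := dotProduct_star_self_eq_zero.1 h2
  have h5 : u - c • ψ = 0 := hφ ▸ h0
  exact sub_eq_zero.1 h5

end Vec

section Blocks
variable {A B K : Type*} [Fintype A] [Fintype B] [Fintype K]
  [DecidableEq A] [DecidableEq B] [DecidableEq K]

lemma embed_mul (M N : Matrix (A × B) (A × B) ℂ) :
    (embedAB M : Matrix ((A×B)⊕K) ((A×B)⊕K) ℂ) * embedAB N = embedAB (M * N) := by
  simp [embedAB, fromBlocks_multiply]

lemma embed_smul (c : ℂ) (M : Matrix (A × B) (A × B) ℂ) :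
    (embedAB (c • M) : Matrix ((A×B)⊕K) ((A×B)⊕K) ℂ) = c • embedAB M := by
  simp [embedAB, Matrix.fromBlocks_smul]

lemma embed_sum {ι : Type*} (s : Finset ι) (f : ι → Matrix (A × B) (A × B) ℂ) :
    (embedAB (∑ a ∈ s, f a) : Matrix ((A×B)⊕K) ((A×B)⊕K) ℂ) = ∑ a ∈ s, embedAB (f a) := by
  classical
  induction s using Finset.induction with
  | empty => simp [embedAB, fromBlocks_zero]
  | @insert _ _ h ih =>
    rw [Finset.sum_insert h, Finset.sum_insert h, ← ih]
    simp [embedAB, Matrix.fromBlocks_add]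

lemma projAB_eq : (projAB : Matrix ((A×B)⊕K) ((A×B)⊕K) ℂ) = embedAB 1 := rfl

lemma projAB_mul_embed (M : Matrix (A × B) (A × B) ℂ) :
    (projAB : Matrix ((A×B)⊕K) ((A×B)⊕K) ℂ) * embedAB M = embedAB M := by
  rw [projAB_eq, embed_mul, one_mul]

lemma embed_mul_projAB (M : Matrix (A × B) (A × B) ℂ) :
    (embedAB M : Matrix ((A×B)⊕K) ((A×B)⊕K) ℂ) * projAB = embedAB M := by
  rw [projAB_eq, embed_mul, mul_one]

lemma oneTensor_mul_embed (U : Matrix B B ℂ) (M : Matrix (A × B) (A × B) ℂ) :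
    (oneTensor U : Matrix ((A×B)⊕K) ((A×B)⊕K) ℂ) * embedAB M
      = embedAB (((1 : Matrix A A ℂ) ⊗ₖ U) * M) := by
  simp [oneTensor, embedAB, fromBlocks_multiply]

lemma embed_mul_oneTensor (U : Matrix B B ℂ) (M : Matrix (A × B) (A × B) ℂ) :
    (embedAB M : Matrix ((A×B)⊕K) ((A×B)⊕K) ℂ) * oneTensor U
      = embedAB (M * ((1 : Matrix A A ℂ) ⊗ₖ U)) := by
  simp [oneTensor, embedAB, fromBlocks_multiply]

lemma oneTensor_conjTranspose (U : Matrix B B ℂ) :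
    (oneTensor U : Matrix ((A×B)⊕K) ((A×B)⊕K) ℂ)ᴴ = oneTensor Uᴴ := by
  have h : ((1 : Matrix A A ℂ) ⊗ₖ U)ᴴ = (1 : Matrix A A ℂ) ⊗ₖ Uᴴ := by
    ext ⟨i, b⟩ ⟨j, b'⟩
    simp [kroneckerMap_apply, conjTranspose_apply, Matrix.one_apply, eq_comm]
    split <;> simp
  simp [oneTensor, fromBlocks_conjTranspose, h]

lemma oneTensor_mul_oneTensor (U V : Matrix B B ℂ) :
    (oneTensor U : Matrix ((A×B)⊕K) ((A×B)⊕K) ℂ) * oneTensor V = oneTensor (U * V) := by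
  simp [oneTensor, fromBlocks_multiply, ← mul_kronecker_mul]

lemma oneTensor_one : (oneTensor 1 : Matrix ((A×B)⊕K) ((A×B)⊕K) ℂ) = 1 := by
  simp [oneTensor, one_kronecker_one, ← fromBlocks_one]

lemma embed_conjTranspose (M : Matrix (A × B) (A × B) ℂ) :
    (embedAB M : Matrix ((A×B)⊕K) ((A×B)⊕K) ℂ)ᴴ = embedAB Mᴴ := by
  simp [embedAB, fromBlocks_conjTranspose]

lemma kron_conjTranspose (M : Matrix A A ℂ) (N : Matrix B B ℂ) :
    (M ⊗ₖ N)ᴴ = Mᴴ ⊗ₖ Nᴴ := by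
  ext ⟨i, b⟩ ⟨j, b'⟩
  simp [kroneckerMap_apply, conjTranspose_apply]

lemma sum_kron {ι : Type*} (s : Finset ι) (f : ι → Matrix A A ℂ) (N : Matrix B B ℂ) :
    (∑ k ∈ s, f k) ⊗ₖ N = ∑ k ∈ s, f k ⊗ₖ N := by
  ext ⟨i, b⟩ ⟨j, b'⟩
  simp [kroneckerMap_apply, Matrix.sum_apply, Finset.sum_mul]

lemma star_sum_elim {α β : Type*} (f : α → ℂ) (g : β → ℂ) :
    star (Sum.elim f g) = Sum.elim (star f) (star g) := by
  funext x; cases x <;> simp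

lemma dot_elim {α β : Type*} [Fintype α] [Fintype β]
    (f : α ⊕ β → ℂ) (g : α → ℂ) (h : β → ℂ) :
    f ⬝ᵥ Sum.elim g h = (fun a => f (Sum.inl a)) ⬝ᵥ g + (fun b => f (Sum.inr b)) ⬝ᵥ h := by
  rw [show f = Sum.elim (fun a => f (Sum.inl a)) (fun b => f (Sum.inr b)) by
    funext x; cases x <;> rfl]
  simp [sumElim_dotProduct_sumElim]

lemma dot_prod_mul (x h : A → ℂ) (g k : B → ℂ) :
    (fun p : A × B => x p.1 * g p.2) ⬝ᵥ (fun p : A × B => h p.1 * k p.2)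
      = (x ⬝ᵥ h) * (g ⬝ᵥ k) := by
  simp only [dotProduct, Fintype.sum_prod_type, Finset.sum_mul, Finset.mul_sum]
  rw [Finset.sum_comm]
  refine Finset.sum_congr rfl fun i _ => Finset.sum_congr rfl fun b _ => by ring

lemma kron_mulVec (M : Matrix A A ℂ) (N : Matrix B B ℂ) (x : A → ℂ) (φ : B → ℂ) :
    (M ⊗ₖ N).mulVec (fun p : A × B => x p.1 * φ p.2)
      = fun p : A × B => M.mulVec x p.1 * N.mulVec φ p.2 := by
  funext p
  simp only [mulVec, dotProduct, kroneckerMap_apply, Fintype.sum_prod_type, Finset.sum_mul,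
    Finset.mul_sum]
  rw [Finset.sum_comm]
  refine Finset.sum_congr rfl fun i _ => Finset.sum_congr rfl fun b _ => by ring

lemma embed_mulVec (N : Matrix (A × B) (A × B) ℂ) (y : ((A × B) ⊕ K) → ℂ) :
    (embedAB N : Matrix ((A×B)⊕K) ((A×B)⊕K) ℂ).mulVec y
      = Sum.elim (N.mulVec fun q => y (Sum.inl q)) 0 := by
  funext x
  cases x with
  | inl p =>
    simp [embedAB, mulVec, dotProduct, Fintype.sum_sum_type, fromBlocks_apply₁₁,
      fromBlocks_apply₁₂]
  | inr κ =>
    simp [embedAB, mulVec, dotProduct, Fintype.sum_sum_type, fromBlocks_apply₂₁,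
      fromBlocks_apply₂₂]

lemma embed_vv_star (x : A → ℂ) (ψ : B → ℂ) :
    (embedAB (vecMulVec x (star x) ⊗ₖ vecMulVec ψ (star ψ)) : Matrix ((A×B)⊕K) ((A×B)⊕K) ℂ)
      = vecMulVec (zvec x ψ) (star (zvec x ψ)) := by
  ext i j
  rcases i with p | κ <;> rcases j with q | κ' <;>
    simp [embedAB, zvec, vecMulVec_apply, kroneckerMap_apply, fromBlocks_apply₁₁,
      fromBlocks_apply₁₂, fromBlocks_apply₂₁, fromBlocks_apply₂₂, star_mul', mul_comm,
      mul_assoc, mul_left_comm]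

lemma sum_vv_delta (x y : A → ℂ) :
    (∑ b : B, vecMulVec (zvec (K := K) x fun b' => if b' = b then (1:ℂ) else 0)
        (star (zvec y fun b' => if b' = b then (1:ℂ) else 0)))
      = embedAB (vecMulVec x (star y) ⊗ₖ (1 : Matrix B B ℂ)) := by
  ext i j
  rcases i with ⟨i, b1⟩ | κ <;> rcases j with ⟨j, b2⟩ | κ' <;>
    simp [embedAB, zvec, Matrix.sum_apply, vecMulVec_apply, kroneckerMap_apply,
      fromBlocks_apply₁₁, fromBlocks_apply₁₂, fromBlocks_apply₂₁, fromBlocks_apply₂₂,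
      Matrix.one_apply, apply_ite, mul_ite, ite_mul, Finset.sum_ite_eq, Finset.sum_ite_eq']
  · rcases eq_or_ne b1 b2 with h | h <;> simp [h, mul_comm]

end Blocks

section Complete
variable {A : Type*} [Fintype A] [DecidableEq A]

lemma complete_mat (v : A → (A → ℂ))
    (hv : ∀ k l : A, ∑ i : A, star (v k i) * v l i = if k = l then 1 else 0) :
    ∑ k, vecMulVec (v k) (star (v k)) = (1 : Matrix A A ℂ) := by
  have hVV : Matrix.of v * (Matrix.of v)ᴴ = (1 : Matrix A A ℂ) := by
    ext k l
    simp only [Matrix.mul_apply, Matrix.of_apply, conjTranspose_apply, Matrix.one_apply]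
    have h1 : (∑ i, v k i * star (v l i)) = star (∑ i, star (v k i) * v l i) := by
      rw [star_sum]
      exact Finset.sum_congr rfl fun i _ => by simp [star_mul', mul_comm]
    rw [h1, hv k l]
    rcases eq_or_ne k l with h | h <;> simp [h]
  have hV'V : (Matrix.of v)ᴴ * Matrix.of v = 1 := mul_eq_one_comm.mp hVV
  ext i j
  have h2 : (∑ k, star (v k i) * v k j) = if i = j then (1:ℂ) else 0 := by
    have h3 := congrFun (congrFun hV'V i) j
    simpa [Matrix.mul_apply, conjTranspose_apply, Matrix.one_apply] using h3
  have h4 : (∑ k, v k i * star (v k j)) = star (∑ k, star (v k i) * v k j) := by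
    rw [star_sum]
    exact Finset.sum_congr rfl fun k _ => by simp [star_mul', mul_comm]
  simp only [Matrix.sum_apply, vecMulVec_apply, Pi.star_apply, Matrix.one_apply]
  rw [h4, h2]
  rcases eq_or_ne i j with h | h <;> simp [h]

end Complete
end GIS

namespace GIS
section Quad
variable {A B K : Type*} [Fintype A] [Fintype B] [Fintype K]
  [DecidableEq A] [DecidableEq B] [DecidableEq K]

lemma quad_inr (N : Matrix (A × B) (A × B) ℂ) (κ : K) :
    star (Sum.elim (0 : A × B → ℂ) fun κ' => if κ' = κ then (1:ℂ) else 0) ⬝ᵥ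
      (embedAB N : Matrix ((A×B)⊕K) ((A×B)⊕K) ℂ).mulVec
        (Sum.elim (0 : A × B → ℂ) fun κ' => if κ' = κ then (1:ℂ) else 0) = 0 := by
  rw [embed_mulVec]
  have h0 : (fun q : A × B =>
      Sum.elim (0 : A × B → ℂ) (fun κ' => if κ' = κ then (1:ℂ) else 0) (Sum.inl q)) = 0 := by
    funext q; simp
  rw [h0, mulVec_zero, dot_elim]
  simp

lemma quad_inl (τ : Matrix A A ℂ) (ψ φ : B → ℂ) (i : A) (hφ : star ψ ⬝ᵥ φ = 0) :
    star (zvec (K := K) (fun j => if j = i then (1:ℂ) else 0) φ) ⬝ᵥ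
      (embedAB (τ ⊗ₖ vecMulVec ψ (star ψ)) : Matrix ((A×B)⊕K) ((A×B)⊕K) ℂ).mulVec
        (zvec (fun j => if j = i then (1:ℂ) else 0) φ) = 0 := by
  rw [embed_mulVec]
  have h1 : (fun q : A × B => zvec (K := K) (fun j => if j = i then (1:ℂ) else 0) φ (Sum.inl q))
      = fun p : A × B => (fun j => if j = i then (1:ℂ) else 0) p.1 * φ p.2 := rfl
  rw [h1, kron_mulVec τ (vecMulVec ψ (star ψ)) (fun j => if j = i then (1:ℂ) else 0) φ]
  have h2 : (vecMulVec ψ (star ψ)).mulVec φ = 0 := by rw [vecMulVec_mulVec', hφ, zero_smul]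
  rw [h2, dot_elim]
  simp [dotProduct]

lemma dot_inr_delta (x : (A × B) ⊕ K → ℂ) (κ : K) :
    star x ⬝ᵥ (Sum.elim (0 : A × B → ℂ) fun κ' => if κ' = κ then (1:ℂ) else 0)
      = star (x (Sum.inr κ)) := by
  rw [dot_elim]
  simp [dotProduct, Pi.star_apply, mul_ite, Finset.sum_ite_eq']

lemma dot_inl_delta (x : (A × B) ⊕ K → ℂ) (i : A) (φ : B → ℂ) :
    star x ⬝ᵥ zvec (fun j => if j = i then (1:ℂ) else 0) φ
      = star (fun b => x (Sum.inl (i, b))) ⬝ᵥ φ := by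
  show star x ⬝ᵥ Sum.elim _ _ = _
  rw [dot_elim]
  simp only [dotProduct, Fintype.sum_prod_type, Pi.star_apply, mul_ite, ite_mul, mul_one,
    mul_zero, zero_mul, one_mul, Finset.sum_ite_eq, Finset.mem_univ, if_true,
    Finset.sum_const_zero, add_zero, Pi.zero_apply]
  rw [Finset.sum_comm]
  simp [Finset.sum_ite_eq']

lemma QQ_mul (x y z w : A → ℂ) (σ τ : Matrix B B ℂ) :
    (embedAB (vecMulVec x (star y) ⊗ₖ σ) : Matrix ((A×B)⊕K) ((A×B)⊕K) ℂ)
        * embedAB (vecMulVec z (star w) ⊗ₖ τ)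
      = (star y ⬝ᵥ z) • embedAB (vecMulVec x (star w) ⊗ₖ (σ * τ)) := by
  rw [embed_mul, ← mul_kronecker_mul, vecMulVec_mul_vecMulVec, smul_kronecker, embed_smul]

end Quad
end GIS

open GIS

/-- **Group-invariant subsystems: conditions 1 and 4 are equivalent.**
Given a Kraus decomposition `Φ(ρ) = Σ_a E_a ρ E_a†` and an orthonormal basis
`{|α_k⟩}` of `H^A` with matrix units `P_{kl} = |α_k⟩⟨α_l| ⊗ 1^B` (zero on `K`),
`B` is group invariant under `Φ` iff there are `U = π g` and scalars `λ_{akl}` with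
`P_{kk} (1^A ⊗ U†) E_a P_{ll} = λ_{akl} P_{kl}` for all `a, k, l` and
`(1^A ⊗ U†) E_a P^{AB} = P^{AB} (1^A ⊗ U†) E_a P^{AB}` for all `a`. -/
theorem groupInvariant_iff_cond4
    {G : Type*} [Group G] {N : ℕ}
    [Fintype A] [Fintype B] [Fintype K] [DecidableEq A] [DecidableEq B] [DecidableEq K]
    (π : G →* Matrix.unitaryGroup B ℂ)
    (Φ : Matrix ((A × B) ⊕ K) ((A × B) ⊕ K) ℂ →ₗ[ℂ] Matrix ((A × B) ⊕ K) ((A × B) ⊕ K) ℂ)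
    (hCP : IsCompletelyPositive Φ)
    (hTP : ∀ ρ, (Φ ρ).trace = ρ.trace)
    (E : Fin N → Matrix ((A × B) ⊕ K) ((A × B) ⊕ K) ℂ)
    (hE : ∀ ρ, Φ ρ = ∑ a, E a * ρ * (E a)ᴴ)
    (v : A → (A → ℂ))
    (hv : ∀ k l : A, ∑ i : A, star (v k i) * v l i = if k = l then 1 else 0)
    (P : A → A → Matrix ((A × B) ⊕ K) ((A × B) ⊕ K) ℂ)
    (hP : ∀ k l : A,
      P k l = embedAB (Matrix.vecMulVec (v k) (star (v l)) ⊗ₖ (1 : Matrix B B ℂ))) :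
    (∃ g : G, ∀ (σA : Matrix A A ℂ) (σB : Matrix B B ℂ), ∃ τA : Matrix A A ℂ,
        Φ (embedAB (σA ⊗ₖ σB)) =
          embedAB (τA ⊗ₖ ((π g : Matrix B B ℂ) * σB * (π g : Matrix B B ℂ)ᴴ))) ↔
      (∃ g : G, ∃ lam : Fin N → A → A → ℂ,
        (∀ (a : Fin N) (k l : A),
          P k k * (oneTensor ((π g : Matrix B B ℂ)ᴴ) * E a) * P l l = lam a k l • P k l) ∧
        (∀ a : Fin N,
          oneTensor ((π g : Matrix B B ℂ)ᴴ) * E a * projAB =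
            projAB * (oneTensor ((π g : Matrix B B ℂ)ᴴ) * E a * projAB))) := by
  classical
  constructor
  · rintro ⟨g, h1⟩
    by_cases hBE : IsEmpty B
    · have hz : ∀ M : Matrix (A × B) (A × B) ℂ,
          (embedAB M : Matrix ((A×B)⊕K) ((A×B)⊕K) ℂ) = 0 := by
        intro M; ext x y
        rcases x with p | κ
        · exact (hBE.false p.2).elim
        rcases y with q | κ'
        · exact (hBE.false q.2).elim
        · simp [embedAB]
      refine ⟨g, fun _ _ _ => 0, fun a k l => ?_, fun a => ?_⟩
      · rw [hP k k, hP l l, hz, hz]; simp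
      · rw [projAB_eq, hz]; simp
    · -- main forward direction
      haveI : Nonempty B := not_isEmpty_iff.mp hBE
      have hUmem := (π g).2
      set U : Matrix B B ℂ := (π g : Matrix B B ℂ) with hUdef
      have hU2 : Uᴴ * U = 1 := by
        rw [← Matrix.star_eq_conjTranspose]; exact Matrix.mem_unitaryGroup_iff'.mp hUmem
      have hvd : ∀ k l : A, star (v k) ⬝ᵥ v l = if k = l then 1 else 0 := by
        intro k l; simpa [dotProduct] using hv k l
      -- Step 1: the conjugated channel sends |v_k⟩⟨v_k| ⊗ |ψ⟩⟨ψ| to τ ⊗ |ψ⟩⟨ψ|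
      have step1 : ∀ (k : A) (ψ : B → ℂ), ∃ τ : Matrix A A ℂ,
          ∑ a, vecMulVec ((oneTensor (A := A) (K := K) Uᴴ * E a).mulVec (zvec (v k) ψ))
              (star ((oneTensor Uᴴ * E a).mulVec (zvec (v k) ψ)))
            = embedAB (τ ⊗ₖ vecMulVec ψ (star ψ)) := by
        intro k ψ
        obtain ⟨τ, hτ⟩ := h1 (vecMulVec (v k) (star (v k))) (vecMulVec ψ (star ψ))
        rw [hE] at hτ
        refine ⟨τ, ?_⟩
        have key := congrArg
          (fun M => oneTensor (A := A) (B := B) (K := K) Uᴴ * M * oneTensor U) hτ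
        simp only at key
        have hL : oneTensor (A := A) (K := K) Uᴴ * (∑ a, E a
              * embedAB (vecMulVec (v k) (star (v k)) ⊗ₖ vecMulVec ψ (star ψ)) * (E a)ᴴ)
              * oneTensor U
            = ∑ a, vecMulVec ((oneTensor Uᴴ * E a).mulVec (zvec (v k) ψ))
                (star ((oneTensor Uᴴ * E a).mulVec (zvec (v k) ψ))) := by
          rw [Finset.mul_sum, Finset.sum_mul]
          refine Finset.sum_congr rfl fun a _ => ?_
          have hadj : (E a)ᴴ * oneTensor (A := A) (K := K) U = (oneTensor Uᴴ * E a)ᴴ := by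
            rw [Matrix.conjTranspose_mul, oneTensor_conjTranspose, conjTranspose_conjTranspose]
          rw [← mul_vecMulVec_star_mul_conjTranspose, ← embed_vv_star, ← hadj]
          simp only [mul_assoc]
        have hR : oneTensor (A := A) (K := K) Uᴴ
              * embedAB (τ ⊗ₖ (U * vecMulVec ψ (star ψ) * Uᴴ)) * oneTensor U
            = embedAB (τ ⊗ₖ vecMulVec ψ (star ψ)) := by
          rw [oneTensor_mul_embed, embed_mul_oneTensor, ← mul_kronecker_mul,
            ← mul_kronecker_mul, one_mul, mul_one]
          have hmid : Uᴴ * (U * vecMulVec ψ (star ψ) * Uᴴ) * U = vecMulVec ψ (star ψ) := by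
            calc Uᴴ * (U * vecMulVec ψ (star ψ) * Uᴴ) * U
                = (Uᴴ * U) * vecMulVec ψ (star ψ) * (Uᴴ * U) := by noncomm_ring
              _ = vecMulVec ψ (star ψ) := by rw [hU2, one_mul, mul_one]
          rw [hmid]
        rw [hL, hR] at key
        exact key
      -- Step 2: each Kraus operator maps v_k ⊗ ψ to (something) ⊗ ψ
      have step2 : ∀ (a : Fin N) (k : A) (ψ : B → ℂ), star ψ ⬝ᵥ ψ ≠ 0 →
          ∃ cc : A → ℂ,
            (oneTensor (A := A) (K := K) Uᴴ * E a).mulVec (zvec (v k) ψ) = zvec cc ψ := by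
        intro a k ψ hψ
        obtain ⟨τ, hτ⟩ := step1 k ψ
        set x : Fin N → ((A × B) ⊕ K) → ℂ :=
          fun a => (oneTensor Uᴴ * E a).mulVec (zvec (v k) ψ) with hx
        have hinr : ∀ κ : K, x a (Sum.inr κ) = 0 := by
          intro κ
          have h2 := support_lemma x _ hτ
            (Sum.elim (0 : A × B → ℂ) fun κ' => if κ' = κ then (1:ℂ) else 0)
            (quad_inr _ κ) a
          rw [dot_inr_delta] at h2
          exact star_eq_zero.1 h2
        have hrow : ∀ i : A, (fun b => x a (Sum.inl (i, b)))
            = ((star ψ ⬝ᵥ (fun b => x a (Sum.inl (i, b)))) / (star ψ ⬝ᵥ ψ)) • ψ := by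
          intro i
          apply eq_smul_of_orthogonal _ _ hψ
          intro φ hφ
          have h2 := support_lemma x _ hτ
            (zvec (fun j => if j = i then (1:ℂ) else 0) φ) (quad_inl τ ψ φ i hφ) a
          rw [dot_inl_delta] at h2
          exact h2
        refine ⟨fun i => (star ψ ⬝ᵥ (fun b => x a (Sum.inl (i, b)))) / (star ψ ⬝ᵥ ψ), ?_⟩
        funext z
        cases z with
        | inl p =>
          have h3 := congrFun (hrow p.1) p.2
          exact h3
        | inr κ => exact hinr κ
      -- Step 3: the coefficient vector is independent of the basis vector chosen
      have step3 : ∀ (a : Fin N) (k : A), ∃ w : A → ℂ, ∀ b : B,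
          (oneTensor (A := A) (K := K) Uᴴ * E a).mulVec
              (zvec (v k) (fun b' => if b' = b then (1:ℂ) else 0))
            = zvec w (fun b' => if b' = b then (1:ℂ) else 0) := by
        intro a k
        obtain ⟨b0⟩ := (inferInstance : Nonempty B)
        have hδ : ∀ b : B, star (fun b' => if b' = b then (1:ℂ) else 0)
            ⬝ᵥ (fun b' => if b' = b then (1:ℂ) else 0) = 1 := by
          intro b
          simp [dotProduct, apply_ite, Finset.sum_ite_eq']
        obtain ⟨c0, hc0⟩ := step2 a k _ (by rw [hδ b0]; exact one_ne_zero)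
        refine ⟨c0, ?_⟩
        intro b
        rcases eq_or_ne b b0 with rfl | hb
        · exact hc0
        · obtain ⟨cb, hcb⟩ := step2 a k (fun b' => if b' = b then (1:ℂ) else 0)
            (by rw [hδ b]; exact one_ne_zero)
          have hψs : star (fun b' => (if b' = b0 then (1:ℂ) else 0)
                + (if b' = b then (1:ℂ) else 0))
              ⬝ᵥ (fun b' => (if b' = b0 then (1:ℂ) else 0) + (if b' = b then (1:ℂ) else 0))
              ≠ 0 := by
            have h4 : star (fun b' => (if b' = b0 then (1:ℂ) else 0)
                  + (if b' = b then (1:ℂ) else 0))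
                ⬝ᵥ (fun b' => (if b' = b0 then (1:ℂ) else 0) + (if b' = b then (1:ℂ) else 0))
                = 2 := by
              have hterm : ∀ b' : B, star ((if b' = b0 then (1:ℂ) else 0)
                    + (if b' = b then (1:ℂ) else 0))
                  * ((if b' = b0 then (1:ℂ) else 0) + (if b' = b then (1:ℂ) else 0))
                  = (if b' = b0 then (1:ℂ) else 0) + (if b' = b then (1:ℂ) else 0) := by
                intro b'
                rcases eq_or_ne b' b0 with rfl | h0
                · simp [Ne.symm hb]
                · rcases eq_or_ne b' b with rfl | h2
                  · simp [h0]
                  · simp [h0, h2]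
              rw [dotProduct]
              simp only [Pi.star_apply]
              rw [Finset.sum_congr rfl fun b' _ => hterm b', Finset.sum_add_distrib]
              simp [Finset.sum_ite_eq']
              norm_num
            rw [h4]
            norm_num
          obtain ⟨cs, hcs⟩ := step2 a k _ hψs
          have hlin : zvec (K := K) (v k) (fun b' => (if b' = b0 then (1:ℂ) else 0)
                + (if b' = b then (1:ℂ) else 0))
              = zvec (v k) (fun b' => if b' = b0 then (1:ℂ) else 0)
                + zvec (v k) (fun b' => if b' = b then (1:ℂ) else 0) := by
            funext z; cases z <;> simp [zvec, mul_add]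
          rw [hlin, Matrix.mulVec_add, hc0, hcb] at hcs
          have hev : ∀ i, cb i = cs i := by
            intro i
            have h3 := congrFun hcs (Sum.inl (i, b))
            simpa [zvec, hb] using h3
          have hev0 : ∀ i, c0 i = cs i := by
            intro i
            have h3 := congrFun hcs (Sum.inl (i, b0))
            simpa [zvec, Ne.symm hb] using h3
          rw [hcb]
          funext z
          cases z with
          | inl p =>
            simp only [zvec, Sum.elim_inl]
            rw [hev p.1, ← hev0 p.1]
          | inr κ => rfl
      -- Step 4: F_a P_ll is an embedded elementary operator
      have step4 : ∀ (a : Fin N) (l : A), ∃ w : A → ℂ,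
          oneTensor (A := A) (K := K) Uᴴ * E a * P l l
            = embedAB (vecMulVec w (star (v l)) ⊗ₖ (1 : Matrix B B ℂ)) := by
        intro a l
        obtain ⟨w, hw⟩ := step3 a l
        refine ⟨w, ?_⟩
        have hPdecomp : P l l = ∑ b : B,
            vecMulVec (zvec (K := K) (v l) (fun b' => if b' = b then (1:ℂ) else 0))
              (star (zvec (v l) (fun b' => if b' = b then (1:ℂ) else 0))) := by
          rw [hP l l, ← sum_vv_delta]
        rw [hPdecomp, Finset.mul_sum, ← sum_vv_delta w (v l)]
        refine Finset.sum_congr rfl fun b _ => ?_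
        rw [GIS.mul_vecMulVec, hw b]
      choose w hw using step4
      refine ⟨g, fun a k l => star (v k) ⬝ᵥ w a l, fun a k l => ?_, fun a => ?_⟩
      · rw [mul_assoc, hw a l, hP k k, QQ_mul, hP k l, one_mul]
      · have hprojsum : (projAB : Matrix ((A×B)⊕K) ((A×B)⊕K) ℂ) = ∑ l, P l l := by
          calc (projAB : Matrix ((A×B)⊕K) ((A×B)⊕K) ℂ)
              = embedAB ((1 : Matrix A A ℂ) ⊗ₖ (1 : Matrix B B ℂ)) := by
                rw [projAB_eq, Matrix.one_kronecker_one]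
            _ = embedAB ((∑ l, vecMulVec (v l) (star (v l))) ⊗ₖ (1 : Matrix B B ℂ)) := by
                rw [complete_mat v hv]
            _ = ∑ l, P l l := by
                rw [sum_kron, embed_sum]
                exact Finset.sum_congr rfl fun l _ => (hP l l).symm
        have hXP : oneTensor (A := A) (K := K) Uᴴ * E a * projAB
            = ∑ l, embedAB (vecMulVec (w a l) (star (v l)) ⊗ₖ (1 : Matrix B B ℂ)) := by
          rw [hprojsum, Finset.mul_sum]
          exact Finset.sum_congr rfl fun l _ => hw a l
        rw [hXP, Finset.mul_sum]
        exact Finset.sum_congr rfl fun l _ => (projAB_mul_embed _).symm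
  · rintro ⟨g, lam, hA4, hB4⟩
    by_cases hBE : IsEmpty B
    · refine ⟨g, fun σA σB => ⟨0, ?_⟩⟩
      have h1 : σA ⊗ₖ σB = (0 : Matrix (A × B) (A × B) ℂ) := by
        ext p q; exact (hBE.false p.2).elim
      have h2 : (0 : Matrix A A ℂ) ⊗ₖ ((π g : Matrix B B ℂ) * σB * (π g : Matrix B B ℂ)ᴴ)
          = (0 : Matrix (A × B) (A × B) ℂ) := by
        ext p q; exact (hBE.false p.2).elim
      rw [h1, h2]
      have h3 : (embedAB (0 : Matrix (A × B) (A × B) ℂ) : Matrix ((A×B)⊕K) ((A×B)⊕K) ℂ) = 0 := by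
        simp [embedAB, Matrix.fromBlocks_zero]
      rw [h3, map_zero]
    · -- main reverse direction
      haveI : Nonempty B := not_isEmpty_iff.mp hBE
      refine ⟨g, ?_⟩
      intro σA σB
      have hUmem := (π g).2
      set U : Matrix B B ℂ := (π g : Matrix B B ℂ) with hUdef
      have hU1 : U * Uᴴ = 1 := by
        rw [← Matrix.star_eq_conjTranspose]; exact Matrix.mem_unitaryGroup_iff.mp hUmem
      have hvd : ∀ k l : A, star (v k) ⬝ᵥ v l = if k = l then 1 else 0 := by
        intro k l; simpa [dotProduct] using hv k l
      have hprojsum : (projAB : Matrix ((A×B)⊕K) ((A×B)⊕K) ℂ) = ∑ k, P k k := by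
        calc (projAB : Matrix ((A×B)⊕K) ((A×B)⊕K) ℂ)
            = embedAB ((1 : Matrix A A ℂ) ⊗ₖ (1 : Matrix B B ℂ)) := by
              rw [projAB_eq, Matrix.one_kronecker_one]
          _ = embedAB ((∑ k, vecMulVec (v k) (star (v k))) ⊗ₖ (1 : Matrix B B ℂ)) := by
              rw [complete_mat v hv]
          _ = ∑ k, P k k := by
              rw [sum_kron, embed_sum]
              exact Finset.sum_congr rfl fun k _ => (hP k k).symm
      have hr1 : ∀ (a : Fin N) (l : A),
          oneTensor (A := A) (K := K) Uᴴ * E a * P l l = ∑ k, lam a k l • P k l := by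
        intro a l
        have h5 : (projAB : Matrix ((A×B)⊕K) ((A×B)⊕K) ℂ) * P l l = P l l := by
          rw [hP l l, projAB_mul_embed]
        have h6 : oneTensor (A := A) (K := K) Uᴴ * E a * P l l
            = projAB * (oneTensor Uᴴ * E a * projAB) * P l l := by
          conv_lhs => rw [← h5, ← mul_assoc, hB4 a]
        rw [h6, mul_assoc projAB _ (P l l), mul_assoc (oneTensor Uᴴ * E a) projAB (P l l), h5,
          hprojsum, Finset.sum_mul]
        refine Finset.sum_congr rfl fun k _ => ?_
        rw [← mul_assoc]
        exact hA4 a k l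
      have hPH : ∀ k l, (P k l)ᴴ = P l k := by
        intro k l
        rw [hP k l, hP l k, embed_conjTranspose, kron_conjTranspose, Matrix.conjTranspose_one,
          vv_conjTranspose]
      have hr2 : ∀ (a : Fin N) (l : A),
          P l l * (oneTensor (A := A) (K := K) Uᴴ * E a)ᴴ = ∑ n, star (lam a n l) • P l n := by
        intro a l
        have h7 := congrArg Matrix.conjTranspose (hr1 a l)
        rw [Matrix.conjTranspose_mul, hPH, Matrix.conjTranspose_sum] at h7
        simp only [Matrix.conjTranspose_smul, hPH] at h7
        exact h7
      have hQP : ∀ (k l m : A) (σ : Matrix B B ℂ),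
          (embedAB (vecMulVec (v k) (star (v l)) ⊗ₖ σ) : Matrix ((A×B)⊕K) ((A×B)⊕K) ℂ) * P l m
            = embedAB (vecMulVec (v k) (star (v m)) ⊗ₖ σ) := by
        intro k l m σ
        rw [hP l m, QQ_mul, hvd, if_pos rfl, one_smul, mul_one]
      have hPQ : ∀ (k l m : A) (σ : Matrix B B ℂ),
          (P k l : Matrix ((A×B)⊕K) ((A×B)⊕K) ℂ)
              * embedAB (vecMulVec (v l) (star (v m)) ⊗ₖ σ)
            = embedAB (vecMulVec (v k) (star (v m)) ⊗ₖ σ) := by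
        intro k l m σ
        rw [hP k l, QQ_mul, hvd, if_pos rfl, one_smul, one_mul]
      have hFQ : ∀ (a : Fin N) (k l : A) (σ : Matrix B B ℂ),
          oneTensor (A := A) (K := K) Uᴴ * E a * embedAB (vecMulVec (v k) (star (v l)) ⊗ₖ σ)
            = ∑ m, lam a m k • embedAB (vecMulVec (v m) (star (v l)) ⊗ₖ σ) := by
        intro a k l σ
        rw [← hPQ k k l σ, ← mul_assoc, hr1 a k, Finset.sum_mul]
        refine Finset.sum_congr rfl fun m _ => ?_
        rw [smul_mul_assoc, hPQ m k l σ]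
      have hQFH : ∀ (a : Fin N) (m l : A) (σ : Matrix B B ℂ),
          (embedAB (vecMulVec (v m) (star (v l)) ⊗ₖ σ) : Matrix ((A×B)⊕K) ((A×B)⊕K) ℂ)
              * (oneTensor (A := A) (K := K) Uᴴ * E a)ᴴ
            = ∑ n, star (lam a n l) • embedAB (vecMulVec (v m) (star (v n)) ⊗ₖ σ) := by
        intro a m l σ
        rw [← hQP m l l σ, mul_assoc, hr2 a l, Finset.mul_sum]
        refine Finset.sum_congr rfl fun n _ => ?_
        rw [mul_smul_comm, hQP m l n σ]
      set c : A → A → ℂ := fun k l => star (v k) ⬝ᵥ σA.mulVec (v l) with hcdef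
      have hdecomp : (embedAB (σA ⊗ₖ σB) : Matrix ((A×B)⊕K) ((A×B)⊕K) ℂ)
          = ∑ k, ∑ l, c k l • embedAB (vecMulVec (v k) (star (v l)) ⊗ₖ σB) := by
        have h8 : σA = ∑ k, ∑ l, c k l • vecMulVec (v k) (star (v l)) := by
          calc σA = (∑ k, vecMulVec (v k) (star (v k))) * σA
                * (∑ l, vecMulVec (v l) (star (v l))) := by
                rw [complete_mat v hv, one_mul, mul_one]
            _ = ∑ k, ∑ l, c k l • vecMulVec (v k) (star (v l)) := by
                simp only [Finset.sum_mul, Finset.mul_sum]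
                rw [Finset.sum_comm]
                refine Finset.sum_congr rfl fun k _ => Finset.sum_congr rfl fun l _ => ?_
                rw [vv_mul_mat_mul_vv]
        calc (embedAB (σA ⊗ₖ σB) : Matrix ((A×B)⊕K) ((A×B)⊕K) ℂ)
            = embedAB ((∑ k, ∑ l, c k l • vecMulVec (v k) (star (v l))) ⊗ₖ σB) := by rw [← h8]
          _ = ∑ k, ∑ l, c k l • embedAB (vecMulVec (v k) (star (v l)) ⊗ₖ σB) := by
              rw [sum_kron, embed_sum]
              refine Finset.sum_congr rfl fun k _ => ?_
              rw [sum_kron, embed_sum]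
              refine Finset.sum_congr rfl fun l _ => ?_
              rw [Matrix.smul_kronecker, embed_smul]
      refine ⟨∑ a, ∑ k, ∑ l, ∑ m, ∑ n,
        (c k l * lam a m k * star (lam a n l)) • vecMulVec (v m) (star (v n)), ?_⟩
      rw [hE]
      have hEeq : ∀ a, E a = oneTensor (A := A) (K := K) U * (oneTensor Uᴴ * E a) := by
        intro a; rw [← mul_assoc, oneTensor_mul_oneTensor, hU1, oneTensor_one, one_mul]
      have hcore : ∑ a, (oneTensor (A := A) (K := K) Uᴴ * E a) * embedAB (σA ⊗ₖ σB)
            * (oneTensor Uᴴ * E a)ᴴ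
          = embedAB ((∑ a, ∑ k, ∑ l, ∑ m, ∑ n,
              (c k l * lam a m k * star (lam a n l)) • vecMulVec (v m) (star (v n))) ⊗ₖ σB) := by
        have hrhs : embedAB ((∑ a, ∑ k, ∑ l, ∑ m, ∑ n,
              (c k l * lam a m k * star (lam a n l)) • vecMulVec (v m) (star (v n))) ⊗ₖ σB)
            = ∑ a, ∑ k, ∑ l, ∑ m, ∑ n, (c k l * lam a m k * star (lam a n l)) •
                (embedAB (vecMulVec (v m) (star (v n)) ⊗ₖ σB)
                  : Matrix ((A×B)⊕K) ((A×B)⊕K) ℂ) := by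
          rw [sum_kron, embed_sum]
          refine Finset.sum_congr rfl fun a _ => ?_
          rw [sum_kron, embed_sum]
          refine Finset.sum_congr rfl fun k _ => ?_
          rw [sum_kron, embed_sum]
          refine Finset.sum_congr rfl fun l _ => ?_
          rw [sum_kron, embed_sum]
          refine Finset.sum_congr rfl fun m _ => ?_
          rw [sum_kron, embed_sum]
          refine Finset.sum_congr rfl fun n _ => ?_
          rw [Matrix.smul_kronecker, embed_smul]
        rw [hrhs]
        refine Finset.sum_congr rfl fun a _ => ?_
        rw [hdecomp]
        simp only [Finset.mul_sum, Finset.sum_mul, mul_smul_comm, smul_mul_assoc]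
        refine Finset.sum_congr rfl fun k _ => Finset.sum_congr rfl fun l _ => ?_
        rw [hFQ a k l σB]
        simp only [Finset.sum_mul, smul_mul_assoc, Finset.smul_sum]
        refine Finset.sum_congr rfl fun m _ => ?_
        rw [hQFH a m l σB, Finset.smul_sum, Finset.smul_sum]
        refine Finset.sum_congr rfl fun n _ => ?_
        rw [smul_smul, smul_smul, mul_assoc]
      calc ∑ a, E a * embedAB (σA ⊗ₖ σB) * (E a)ᴴ
          = oneTensor U * (∑ a, (oneTensor Uᴴ * E a) * embedAB (σA ⊗ₖ σB)
              * (oneTensor Uᴴ * E a)ᴴ) * oneTensor Uᴴ := by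
            rw [Finset.mul_sum, Finset.sum_mul]
            refine Finset.sum_congr rfl fun a _ => ?_
            conv_lhs => rw [hEeq a]
            rw [Matrix.conjTranspose_mul, oneTensor_conjTranspose]
            simp only [mul_assoc]
        _ = oneTensor U * embedAB ((∑ a, ∑ k, ∑ l, ∑ m, ∑ n,
              (c k l * lam a m k * star (lam a n l)) • vecMulVec (v m) (star (v n))) ⊗ₖ σB)
              * oneTensor Uᴴ := by rw [hcore]
        _ = embedAB ((∑ a, ∑ k, ∑ l, ∑ m, ∑ n,
              (c k l * lam a m k * star (lam a n l)) • vecMulVec (v m) (star (v n)))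
                ⊗ₖ (U * σB * Uᴴ)) := by
            rw [oneTensor_mul_embed, embed_mul_oneTensor, ← mul_kronecker_mul,
              ← mul_kronecker_mul, one_mul, mul_one]
end

section
/- (Theorem on group-invariant subsystems, equivalence of conditions 1 and 5.) Let G be a group with a unitary representation π : G → U(H^B) on the finite-dimensional Hilbert space H^B = ℂ^B, let H = (H^A ⊗ H^B) ⊕ K with H^A = ℂ^A, and let Φ be a quantum channel on B(H) given in operator-sum form Φ(ρ) = Σ_a E_a ρ E_a†. Then B is group invariant under Φ — i.e. there exists U ∈ π(G) such that for all operators σ^A on H^A and σ^B on H^B there is an operator τ^A on H^A with Φ(σ^A ⊗ σ^B) = τ^A ⊗ U σ^B U† — if and only if there exists U ∈ π(G) such that the subspace H^A ⊗ H^B of H is invariant for every operator (1^A ⊗ U†) E_a, and each restricted operator (1^A ⊗ U†) E_a P^{AB}, viewed as an operator on H^A ⊗ H^B, belongs to the operator algebra B(H^A) ⊗ 1^B (i.e. is of the form X ⊗ 1^B for some operator X on H^A). -/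
open Matrix
open scoped ComplexOrder Kronecker

variable {A B K : Type*}

section AuxGeneral

set_option linter.unusedSectionVars false

lemma sum_mul_conj_eq_zero {α : Type*} [Fintype α] {w : α → ℂ}
    (h : ∑ x, w x * star (w x) = 0) (x : α) : w x = 0 := by
  have h' : ((∑ x, Complex.normSq (w x) : ℝ) : ℂ) = 0 := by
    push_cast
    rw [← h]
    exact Finset.sum_congr rfl fun x _ => (Complex.mul_conj (w x)).symm
  have h2 : (∑ x, Complex.normSq (w x) : ℝ) = 0 := by exact_mod_cast h'
  have h3 := (Finset.sum_eq_zero_iff_of_nonneg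
    (fun x _ => Complex.normSq_nonneg (w x))).mp h2 x (Finset.mem_univ x)
  exact Complex.normSq_eq_zero.mp h3

lemma dotProduct_finset_sum {ι κ : Type*} [Fintype κ] (v : κ → ℂ) (s : Finset ι)
    (f : ι → κ → ℂ) : v ⬝ᵥ (∑ a ∈ s, f a) = ∑ a ∈ s, v ⬝ᵥ f a := by
  simp only [dotProduct, Finset.sum_apply, Finset.mul_sum]
  exact Finset.sum_comm

lemma sum_mulVec' {ι m n : Type*} [Fintype n] (s : Finset ι) (M : ι → Matrix m n ℂ)
    (v : n → ℂ) : (∑ a ∈ s, M a) *ᵥ v = ∑ a ∈ s, M a *ᵥ v := by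
  ext i
  simp only [Matrix.mulVec, dotProduct, Matrix.sum_apply, Finset.sum_apply,
    Finset.sum_mul]
  rw [Finset.sum_comm]

lemma QF_selfadj {ι κ : Type*} [Fintype ι] [Fintype κ] (Q : Matrix ι κ ℂ) (v : ι → ℂ) :
    star v ⬝ᵥ ((Q * Qᴴ) *ᵥ v)
      = ∑ c, (star v ᵥ* Q) c * star ((star v ᵥ* Q) c) := by
  rw [← Matrix.mulVec_mulVec, dotProduct_mulVec, Matrix.mulVec_conjTranspose]
  simp [dotProduct]

lemma mul_vecMulVec_mul {m n : Type*} [Fintype m] [Fintype n]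
    (M : Matrix m n ℂ) (x y : n → ℂ) (P : Matrix n m ℂ) :
    M * Matrix.vecMulVec x y * P = Matrix.vecMulVec (M *ᵥ x) (y ᵥ* P) := by
  ext i j
  simp only [Matrix.mul_apply, Matrix.vecMulVec_apply, Matrix.mulVec, Matrix.vecMul,
    dotProduct, Finset.sum_mul, Finset.mul_sum]
  exact Finset.sum_congr rfl fun k _ => Finset.sum_congr rfl fun l _ => by ring

lemma kronecker_conjTranspose' {m n p q : Type*} (M : Matrix m n ℂ) (P : Matrix p q ℂ) :
    (M ⊗ₖ P)ᴴ = Mᴴ ⊗ₖ Pᴴ := by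
  ext ⟨i, j⟩ ⟨k, l⟩
  simp [Matrix.conjTranspose_apply, mul_comm]

lemma sum_kronecker' {ι m n p q : Type*} (s : Finset ι) (f : ι → Matrix m n ℂ)
    (C : Matrix p q ℂ) : (∑ a ∈ s, f a) ⊗ₖ C = ∑ a ∈ s, f a ⊗ₖ C := by
  ext ⟨i, j⟩ ⟨k, l⟩
  simp [Matrix.sum_apply, Finset.sum_mul]

end AuxGeneral

section AuxABK

variable [Fintype A] [Fintype B] [Fintype K] [DecidableEq A] [DecidableEq B] [DecidableEq K]

set_option linter.unusedSectionVars false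

lemma embedAB_mul (M P : Matrix (A × B) (A × B) ℂ) :
    (embedAB M * embedAB P : Matrix ((A × B) ⊕ K) ((A × B) ⊕ K) ℂ)
      = embedAB (M * P) := by
  simp [embedAB, Matrix.fromBlocks_multiply]

lemma embedAB_conjTranspose (M : Matrix (A × B) (A × B) ℂ) :
    (embedAB M : Matrix ((A × B) ⊕ K) ((A × B) ⊕ K) ℂ)ᴴ = embedAB Mᴴ := by
  simp [embedAB, Matrix.fromBlocks_conjTranspose]

lemma projAB_conjTranspose :
    (projAB : Matrix ((A × B) ⊕ K) ((A × B) ⊕ K) ℂ)ᴴ = projAB := by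
  simp [projAB, Matrix.fromBlocks_conjTranspose]

lemma projAB_mul_embedAB (M : Matrix (A × B) (A × B) ℂ) :
    (projAB * embedAB M : Matrix ((A × B) ⊕ K) ((A × B) ⊕ K) ℂ) = embedAB M := by
  simp [projAB, embedAB, Matrix.fromBlocks_multiply]

lemma embedAB_mul_projAB (M : Matrix (A × B) (A × B) ℂ) :
    (embedAB M * projAB : Matrix ((A × B) ⊕ K) ((A × B) ⊕ K) ℂ) = embedAB M := by
  simp [projAB, embedAB, Matrix.fromBlocks_multiply]

lemma oneTensor_mul_embedAB (U : Matrix B B ℂ) (M : Matrix (A × B) (A × B) ℂ) :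
    (oneTensor U * embedAB M : Matrix ((A × B) ⊕ K) ((A × B) ⊕ K) ℂ)
      = embedAB (((1 : Matrix A A ℂ) ⊗ₖ U) * M) := by
  simp [oneTensor, embedAB, Matrix.fromBlocks_multiply]

lemma embedAB_mul_oneTensor (U : Matrix B B ℂ) (M : Matrix (A × B) (A × B) ℂ) :
    (embedAB M * oneTensor U : Matrix ((A × B) ⊕ K) ((A × B) ⊕ K) ℂ)
      = embedAB (M * ((1 : Matrix A A ℂ) ⊗ₖ U)) := by
  simp [oneTensor, embedAB, Matrix.fromBlocks_multiply]

lemma oneTensor_conjTranspose (U : Matrix B B ℂ) :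
    (oneTensor U : Matrix ((A × B) ⊕ K) ((A × B) ⊕ K) ℂ)ᴴ = oneTensor Uᴴ := by
  simp [oneTensor, Matrix.fromBlocks_conjTranspose, kronecker_conjTranspose']

lemma oneTensor_mul_oneTensor {U V : Matrix B B ℂ} (h : U * V = 1) :
    (oneTensor U * oneTensor V : Matrix ((A × B) ⊕ K) ((A × B) ⊕ K) ℂ) = 1 := by
  simp only [oneTensor, Matrix.fromBlocks_multiply, Matrix.mul_zero, Matrix.zero_mul,
    add_zero, zero_add, Matrix.mul_one, ← Matrix.mul_kronecker_mul, h, Matrix.mul_one,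
    Matrix.one_kronecker_one]
  exact Matrix.fromBlocks_one

lemma embedAB_finset_sum {ι : Type*} (s : Finset ι) (f : ι → Matrix (A × B) (A × B) ℂ) :
    (∑ a ∈ s, (embedAB (f a) : Matrix ((A × B) ⊕ K) ((A × B) ⊕ K) ℂ))
      = embedAB (∑ a ∈ s, f a) := by
  ext i j
  cases i with
  | inl p => cases j with
    | inl q => simp [embedAB, Matrix.sum_apply]
    | inr k => simp [embedAB, Matrix.sum_apply]
  | inr k => cases j <;> simp [embedAB, Matrix.sum_apply]

lemma mul_projAB_inl (M : Matrix ((A × B) ⊕ K) ((A × B) ⊕ K) ℂ) (i : (A × B) ⊕ K)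
    (q : A × B) : (M * projAB : Matrix ((A × B) ⊕ K) ((A × B) ⊕ K) ℂ) i (Sum.inl q) = M i (Sum.inl q) := by
  rw [Matrix.mul_apply, Fintype.sum_sum_type]
  simp [projAB, Matrix.one_apply, Finset.sum_ite_eq]

lemma mul_projAB_inr (M : Matrix ((A × B) ⊕ K) ((A × B) ⊕ K) ℂ) (i : (A × B) ⊕ K)
    (k : K) : (M * projAB : Matrix ((A × B) ⊕ K) ((A × B) ⊕ K) ℂ) i (Sum.inr k) = 0 := by
  rw [Matrix.mul_apply, Fintype.sum_sum_type]
  simp [projAB]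

lemma projAB_mul_inl (M : Matrix ((A × B) ⊕ K) ((A × B) ⊕ K) ℂ) (p : A × B)
    (j : (A × B) ⊕ K) : (projAB * M : Matrix ((A × B) ⊕ K) ((A × B) ⊕ K) ℂ) (Sum.inl p) j = M (Sum.inl p) j := by
  rw [Matrix.mul_apply, Fintype.sum_sum_type]
  simp [projAB, Matrix.one_apply, Finset.sum_ite_eq]

lemma projAB_mul_inr (M : Matrix ((A × B) ⊕ K) ((A × B) ⊕ K) ℂ) (k : K)
    (j : (A × B) ⊕ K) : (projAB * M : Matrix ((A × B) ⊕ K) ((A × B) ⊕ K) ℂ) (Sum.inr k) j = 0 := by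
  rw [Matrix.mul_apply, Fintype.sum_sum_type]
  simp [projAB]

lemma oneTensor_mul_apply_inl (U : Matrix B B ℂ) (F : Matrix ((A × B) ⊕ K) ((A × B) ⊕ K) ℂ)
    (a0 : A) (b : B) (q : (A × B) ⊕ K) :
    (oneTensor U * F : Matrix ((A × B) ⊕ K) ((A × B) ⊕ K) ℂ) (Sum.inl (a0, b)) q = ∑ b1, U b b1 * F (Sum.inl (a0, b1)) q := by
  rw [Matrix.mul_apply, Fintype.sum_sum_type]
  simp only [oneTensor, Matrix.fromBlocks_apply₁₁, Matrix.fromBlocks_apply₁₂,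
    Matrix.zero_apply, zero_mul, Finset.sum_const_zero, add_zero, Fintype.sum_prod_type,
    Matrix.kroneckerMap_apply, Matrix.one_apply, ite_mul, one_mul, zero_mul]
  rw [Finset.sum_comm]
  simp [Finset.sum_ite_eq]

lemma oneTensor_mul_apply_inr (U : Matrix B B ℂ) (F : Matrix ((A × B) ⊕ K) ((A × B) ⊕ K) ℂ)
    (k : K) (q : (A × B) ⊕ K) :
    (oneTensor U * F : Matrix ((A × B) ⊕ K) ((A × B) ⊕ K) ℂ) (Sum.inr k) q = F (Sum.inr k) q := by
  rw [Matrix.mul_apply, Fintype.sum_sum_type]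
  simp [oneTensor, Matrix.one_apply, Finset.sum_ite_eq]

end AuxABK

section Key

variable [Fintype A] [Fintype B] [Fintype K] [DecidableEq A] [DecidableEq B] [DecidableEq K]

set_option linter.unusedSectionVars false

def Rmat (χ : B → ℂ) : Matrix ((A × B) ⊕ K) A ℂ :=
  Matrix.of (Sum.elim (fun p c => if p.1 = c then χ p.2 else 0) (fun _ _ => 0))

lemma Rmat_eq (χ : B → ℂ) :
    (Rmat χ : Matrix ((A × B) ⊕ K) A ℂ) * (Rmat (A := A) (K := K) χ)ᴴ
      = embedAB ((1 : Matrix A A ℂ) ⊗ₖ Matrix.vecMulVec χ (star χ)) := by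
  ext i j
  cases i with
  | inl p =>
    cases j with
    | inl q =>
      rcases p with ⟨a, b⟩; rcases q with ⟨a', b'⟩
      by_cases h : a = a'
      · subst h
        simp [Rmat, embedAB, Matrix.mul_apply, Matrix.one_apply, Finset.sum_ite_eq,
          apply_ite (star : ℂ → ℂ), ite_mul, mul_ite, Matrix.vecMulVec_apply]
      · simp [Rmat, embedAB, Matrix.mul_apply, Matrix.one_apply, h,
          apply_ite (star : ℂ → ℂ), ite_mul, mul_ite, Finset.sum_ite_eq,
          Matrix.vecMulVec_apply]
    | inr k =>
      simp [Rmat, embedAB, Matrix.mul_apply]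
  | inr k =>
    cases j <;> simp [Rmat, embedAB, Matrix.mul_apply]

lemma mulRmat_apply (F : Matrix ((A × B) ⊕ K) ((A × B) ⊕ K) ℂ)
    (χ : B → ℂ) (i : (A × B) ⊕ K) (c : A) :
    (F * Rmat (A := A) (K := K) χ : Matrix ((A × B) ⊕ K) A ℂ) i c = ∑ b, F i (Sum.inl (c, b)) * χ b := by
  rw [Matrix.mul_apply, Fintype.sum_sum_type]
  simp only [Rmat, Matrix.of_apply, Sum.elim_inl, Sum.elim_inr, mul_zero, Finset.sum_const_zero,
    add_zero, Fintype.sum_prod_type, mul_ite]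
  rw [Finset.sum_comm]
  simp [Finset.sum_ite_eq']

lemma key_w_zero {N : ℕ} (E : Fin N → Matrix ((A × B) ⊕ K) ((A × B) ⊕ K) ℂ)
    (τ : Matrix A A ℂ) (χ u : B → ℂ)
    (hsum : ∑ a, E a * embedAB ((1 : Matrix A A ℂ) ⊗ₖ Matrix.vecMulVec χ (star χ)) * (E a)ᴴ
      = embedAB (τ ⊗ₖ Matrix.vecMulVec u (star u)))
    (v : (A × B) ⊕ K → ℂ) (hv : ∀ c : A, ∑ b, star (u b) * v (Sum.inl (c, b)) = 0)
    (a : Fin N) (c : A) :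
    ∑ i, star (v i) * (∑ b, E a i (Sum.inl (c, b)) * χ b) = 0 := by
  set R : Matrix ((A × B) ⊕ K) A ℂ := Rmat χ with hRdef
  -- the right-hand side annihilates v
  have hRv : embedAB (τ ⊗ₖ Matrix.vecMulVec u (star u)) *ᵥ v = 0 := by
    ext i
    cases i with
    | inl p =>
      rcases p with ⟨a0, b⟩
      rw [Matrix.mulVec, dotProduct, Fintype.sum_sum_type]
      simp only [embedAB, Matrix.fromBlocks_apply₁₁, Matrix.fromBlocks_apply₁₂,
        Matrix.zero_apply, zero_mul, Finset.sum_const_zero, add_zero, Fintype.sum_prod_type,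
        Matrix.kroneckerMap_apply, Matrix.vecMulVec_apply, Pi.star_apply, Pi.zero_apply]
      calc ∑ a', ∑ b', τ a0 a' * (u b * star (u b')) * v (Sum.inl (a', b'))
          = ∑ a', (τ a0 a' * u b) * ∑ b', star (u b') * v (Sum.inl (a', b')) := by
            refine Finset.sum_congr rfl fun a' _ => ?_
            rw [Finset.mul_sum]
            exact Finset.sum_congr rfl fun b' _ => by ring
        _ = 0 := by
            simp only [hv, mul_zero, Finset.sum_const_zero]
    | inr k =>
      rw [Matrix.mulVec, dotProduct, Fintype.sum_sum_type]
      simp [embedAB]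
  -- rewrite the left-hand side of hsum using Rmat
  have hterm : ∀ a : Fin N,
      E a * embedAB ((1 : Matrix A A ℂ) ⊗ₖ Matrix.vecMulVec χ (star χ)) * (E a)ᴴ
        = (E a * R) * (E a * R)ᴴ := by
    intro a
    rw [hRdef, ← Rmat_eq (A := A) (K := K) χ]
    simp only [Matrix.conjTranspose_mul, Matrix.mul_assoc]
  have hsum' : ∑ a, (E a * R) * (E a * R)ᴴ
      = embedAB (τ ⊗ₖ Matrix.vecMulVec u (star u)) := by
    rw [← hsum]
    exact Finset.sum_congr rfl fun a _ => (hterm a).symm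
  have hz : ∑ a : Fin N, star v ⬝ᵥ (((E a * R) * (E a * R)ᴴ) *ᵥ v) = 0 := by
    have h0 : star v ⬝ᵥ ((∑ a, (E a * R) * (E a * R)ᴴ) *ᵥ v) = 0 := by
      rw [hsum', hRv, dotProduct_zero]
    rwa [sum_mulVec', dotProduct_finset_sum] at h0
  have hz' : ∑ p : Fin N × A,
      (star v ᵥ* (E p.1 * R)) p.2 * star ((star v ᵥ* (E p.1 * R)) p.2) = 0 := by
    rw [Fintype.sum_prod_type]
    rw [← hz]
    exact Finset.sum_congr rfl fun a _ => (QF_selfadj (E a * R) v).symm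
  have hg := sum_mul_conj_eq_zero hz' (a, c)
  simp only [Matrix.vecMul, dotProduct, Pi.star_apply] at hg
  rw [← hg]
  exact Finset.sum_congr rfl fun i _ => by rw [hRdef, mulRmat_apply]

/-- Condition (A): rows of `E a` in `K` annihilate the subspace. -/
lemma condA {N : ℕ} (E : Fin N → Matrix ((A × B) ⊕ K) ((A × B) ⊕ K) ℂ)
    (U : Matrix B B ℂ)
    (hτ : ∀ χ : B → ℂ, ∃ τ : Matrix A A ℂ,
      ∑ a, E a * embedAB ((1 : Matrix A A ℂ) ⊗ₖ Matrix.vecMulVec χ (star χ)) * (E a)ᴴ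
        = embedAB (τ ⊗ₖ Matrix.vecMulVec (U *ᵥ χ) (star (U *ᵥ χ))))
    (χ : B → ℂ) (a : Fin N) (k : K) (c : A) :
    ∑ b, E a (Sum.inr k) (Sum.inl (c, b)) * χ b = 0 := by
  obtain ⟨τ, hτχ⟩ := hτ χ
  have hkey := key_w_zero E τ χ (U *ᵥ χ) hτχ
    (fun i => if i = Sum.inr k then 1 else 0) (fun c' => by simp) a c
  simpa [apply_ite (star : ℂ → ℂ), ite_mul, Finset.sum_ite_eq'] using hkey

/-- Condition (B): the quadratic-form consequence for the block entries. -/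
lemma condB {N : ℕ} (E : Fin N → Matrix ((A × B) ⊕ K) ((A × B) ⊕ K) ℂ)
    (U : Matrix B B ℂ) (hUl : Uᴴ * U = 1)
    (hτ : ∀ χ : B → ℂ, ∃ τ : Matrix A A ℂ,
      ∑ a, E a * embedAB ((1 : Matrix A A ℂ) ⊗ₖ Matrix.vecMulVec χ (star χ)) * (E a)ᴴ
        = embedAB (τ ⊗ₖ Matrix.vecMulVec (U *ᵥ χ) (star (U *ᵥ χ))))
    (χ : B → ℂ) (a : Fin N) (a0 c : A) :
    ∀ b : B,
      (star χ ⬝ᵥ χ) *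
          (∑ b2, (∑ b1, Uᴴ b b1 * E a (Sum.inl (a0, b1)) (Sum.inl (c, b2))) * χ b2)
        = (∑ b', star (χ b') *
            (∑ b2, (∑ b1, Uᴴ b' b1 * E a (Sum.inl (a0, b1)) (Sum.inl (c, b2))) * χ b2))
            * χ b := by
  obtain ⟨τ, hτχ⟩ := hτ χ
  set u : B → ℂ := U *ᵥ χ with hu
  set y : B → ℂ := fun b1 => ∑ b2, E a (Sum.inl (a0, b1)) (Sum.inl (c, b2)) * χ b2 with hy
  set S : ℂ := ∑ b, star (u b) * u b with hS
  set T : ℂ := ∑ b, star (u b) * y b with hT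
  set w0 : B → ℂ := fun b => S * y b - T * u b with hw0def
  set v : (A × B) ⊕ K → ℂ := Sum.elim (fun p => if p.1 = a0 then w0 p.2 else 0) 0 with hvdef
  have hSreal : star S = S := by
    rw [hS, star_sum]
    exact Finset.sum_congr rfl fun b _ => by rw [star_mul', star_star]; ring
  have hv : ∀ c' : A, ∑ b, star (u b) * v (Sum.inl (c', b)) = 0 := by
    intro c'
    by_cases h : c' = a0
    · subst h
      simp only [hvdef, Sum.elim_inl, if_pos rfl]
      calc ∑ b, star (u b) * w0 b
          = (∑ b, star (u b) * y b) * S - (∑ b, star (u b) * u b) * T := by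
            simp only [hw0def]
            rw [Finset.sum_mul, Finset.sum_mul, ← Finset.sum_sub_distrib]
            exact Finset.sum_congr rfl fun b _ => by ring
        _ = 0 := by rw [← hT, ← hS]; ring
    · simp [hvdef, h]
  have hkey := key_w_zero E τ χ u hτχ v hv a c
  -- the key sum is ∑ b, star (w0 b) * y b
  have hkey' : ∑ b, star (w0 b) * y b = 0 := by
    have hrw : (∑ i, star (v i) * (∑ b2, E a i (Sum.inl (c, b2)) * χ b2))
        = ∑ b, star (w0 b) * y b := by
      rw [Fintype.sum_sum_type]
      simp only [hvdef, Sum.elim_inl, Sum.elim_inr, Pi.zero_apply, star_zero, zero_mul,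
        Finset.sum_const_zero, add_zero, Fintype.sum_prod_type,
        apply_ite (star : ℂ → ℂ), ite_mul]
      rw [Finset.sum_comm]
      simp only [Finset.sum_ite_eq', Finset.mem_univ, if_true]
      rfl
    rw [← hrw]
    exact hkey
  -- abbreviations for the scalar sums
  have hsum1 : ∑ b, star (w0 b) * y b
      = S * (∑ b, star (y b) * y b) - star T * T := by
    simp only [hw0def, star_sub, star_mul']
    calc ∑ b, (star S * star (y b) - star T * star (u b)) * y b
        = star S * (∑ b, star (y b) * y b) - star T * (∑ b, star (u b) * y b) := by
          rw [Finset.mul_sum, Finset.mul_sum, ← Finset.sum_sub_distrib]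
          exact Finset.sum_congr rfl fun b _ => by ring
      _ = star S * (∑ b, star (y b) * y b) - star T * T := by rw [← hT]
      _ = S * (∑ b, star (y b) * y b) - star T * T := by rw [hSreal]
  have hST : S * (∑ b, star (y b) * y b) = star T * T := by
    have h2 : S * (∑ b, star (y b) * y b) - star T * T = 0 := by
      rw [← hsum1, hkey']
    linear_combination h2
  have hw0sum : ∑ b, w0 b * star (w0 b) = 0 := by
    have expand : ∑ b, w0 b * star (w0 b)
        = S * (S * (∑ b, star (y b) * y b) - star T * T) := by
      simp only [hw0def, star_sub, star_mul']
      have : ∀ b : B, (S * y b - T * u b) * (star S * star (y b) - star T * star (u b))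
          = S * star S * (star (y b) * y b) - T * star S * (star (y b) * u b)
            - S * star T * (star (u b) * y b) + T * star T * (star (u b) * u b) := by
        intro b; ring
      rw [Finset.sum_congr rfl fun b _ => this b]
      rw [Finset.sum_add_distrib, Finset.sum_sub_distrib, Finset.sum_sub_distrib]
      rw [← Finset.mul_sum, ← Finset.mul_sum, ← Finset.mul_sum, ← Finset.mul_sum]
      have hyu : ∑ b, star (y b) * u b = star T := by
        rw [hT, star_sum]
        exact Finset.sum_congr rfl fun b _ => by
          rw [star_mul', star_star]; ring
      rw [← hT, hyu, ← hS, hSreal]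
      ring
    rw [expand, hST]
    ring
  have hw0 : ∀ b, w0 b = 0 := fun b => sum_mul_conj_eq_zero hw0sum b
  -- now transfer via unitarity
  have hUu : Uᴴ *ᵥ u = χ := by
    rw [hu, Matrix.mulVec_mulVec, hUl, Matrix.one_mulVec]
  have hSdot : S = star u ⬝ᵥ u := by
    rw [hS]; simp [dotProduct]
  have hTdot : T = star u ⬝ᵥ y := by
    rw [hT]; simp [dotProduct]
  have hSχ : S = star χ ⬝ᵥ χ := by
    rw [hSdot, hu, Matrix.star_mulVec, ← dotProduct_mulVec, Matrix.mulVec_mulVec, hUl,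
      Matrix.one_mulVec]
  have hTχ : T = star χ ⬝ᵥ (Uᴴ *ᵥ y) := by
    rw [hTdot, hu, Matrix.star_mulVec, ← dotProduct_mulVec]
  have hvec : (S • y) = (T • u) := by
    funext b'
    have h := hw0 b'
    simp only [hw0def] at h
    simp only [Pi.smul_apply, smul_eq_mul]
    exact sub_eq_zero.mp h
  have hzχ : ∀ b, S * (Uᴴ *ᵥ y) b = T * χ b := by
    have h2 := congrArg (fun w => Uᴴ *ᵥ w) hvec
    simp only [Matrix.mulVec_smul, hUu] at h2
    intro b
    have hb := congrFun h2 b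
    simpa [smul_eq_mul] using hb
  have hg : ∀ b, (Uᴴ *ᵥ y) b
      = ∑ b2, (∑ b1, Uᴴ b b1 * E a (Sum.inl (a0, b1)) (Sum.inl (c, b2))) * χ b2 := by
    intro b
    simp only [Matrix.mulVec, dotProduct, hy, Finset.sum_mul, Finset.mul_sum]
    rw [Finset.sum_comm]
    exact Finset.sum_congr rfl fun b1 _ => Finset.sum_congr rfl fun b2 _ => by ring
  have hTsum : T = ∑ b', star (χ b') *
      (∑ b2, (∑ b1, Uᴴ b' b1 * E a (Sum.inl (a0, b1)) (Sum.inl (c, b2))) * χ b2) := by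
    rw [hTχ]
    simp only [dotProduct, Pi.star_apply]
    exact Finset.sum_congr rfl fun b' _ => by rw [hg b']
  intro b
  rw [← hg b, ← hSχ, ← hTsum]
  exact hzχ b

end Key

/-- **Group-invariant subsystems: conditions 1 and 5 are equivalent.** -/
theorem groupInvariant_iff_cond5
    {G : Type*} [Group G] {N : ℕ}
    [Fintype A] [Fintype B] [Fintype K] [DecidableEq A] [DecidableEq B] [DecidableEq K]
    (π : G →* Matrix.unitaryGroup B ℂ)
    (Φ : Matrix ((A × B) ⊕ K) ((A × B) ⊕ K) ℂ →ₗ[ℂ] Matrix ((A × B) ⊕ K) ((A × B) ⊕ K) ℂ)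
    (hCP : IsCompletelyPositive Φ)
    (hTP : ∀ ρ, (Φ ρ).trace = ρ.trace)
    (E : Fin N → Matrix ((A × B) ⊕ K) ((A × B) ⊕ K) ℂ)
    (hE : ∀ ρ, Φ ρ = ∑ a, E a * ρ * (E a)ᴴ) :
    (∃ g : G, ∀ (σA : Matrix A A ℂ) (σB : Matrix B B ℂ), ∃ τA : Matrix A A ℂ,
        Φ (embedAB (σA ⊗ₖ σB)) =
          embedAB (τA ⊗ₖ ((π g : Matrix B B ℂ) * σB * (π g : Matrix B B ℂ)ᴴ))) ↔
      (∃ g : G,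
        (∀ a : Fin N,
          projAB * (oneTensor ((π g : Matrix B B ℂ)ᴴ) * E a) * projAB =
            oneTensor ((π g : Matrix B B ℂ)ᴴ) * E a * projAB) ∧
        (∀ a : Fin N, ∃ X : Matrix A A ℂ,
          Matrix.toBlocks₁₁ (oneTensor ((π g : Matrix B B ℂ)ᴴ) * E a * projAB) =
            X ⊗ₖ (1 : Matrix B B ℂ))) := by
  constructor
  · rintro ⟨g, h1⟩
    set U : Matrix B B ℂ := (π g : Matrix B B ℂ) with hUdef
    have hUl : Uᴴ * U = 1 := by
      have := Matrix.mem_unitaryGroup_iff'.mp (π g).2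
      simpa [Matrix.star_eq_conjTranspose] using this
    have hτ : ∀ χ : B → ℂ, ∃ τ : Matrix A A ℂ,
        ∑ a, E a * embedAB ((1 : Matrix A A ℂ) ⊗ₖ Matrix.vecMulVec χ (star χ)) * (E a)ᴴ
          = embedAB (τ ⊗ₖ Matrix.vecMulVec (U *ᵥ χ) (star (U *ᵥ χ))) := by
      intro χ
      obtain ⟨τ, hτ1⟩ := h1 1 (Matrix.vecMulVec χ (star χ))
      refine ⟨τ, ?_⟩
      rw [← hE, hτ1, mul_vecMulVec_mul, Matrix.star_mulVec]
    -- E a vanishes on K-rows against the subspace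
    have hA : ∀ (a : Fin N) (k : K) (p : A × B), E a (Sum.inr k) (Sum.inl p) = 0 := by
      rintro a k ⟨c, b0⟩
      have h := condA E U hτ (Pi.single b0 1) a k c
      simpa [Pi.single_apply, mul_ite] using h
    -- the effective block entries
    have hB := fun (χ : B → ℂ) (a : Fin N) (a0 c : A) (b : B) => condB E U hUl hτ χ a a0 c b
    have hsingle : ∀ (a : Fin N) (a0 c : A) (b b0 : B),
        (∑ b1, Uᴴ b b1 * E a (Sum.inl (a0, b1)) (Sum.inl (c, b0)))
          = if b = b0 then ∑ b1, Uᴴ b0 b1 * E a (Sum.inl (a0, b1)) (Sum.inl (c, b0))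
            else 0 := by
      intro a a0 c b b0
      have h := hB (Pi.single b0 1) a a0 c b
      simp only [dotProduct, Pi.star_apply, Pi.single_apply,
        apply_ite (star : ℂ → ℂ), star_one, star_zero, mul_ite, mul_one, mul_zero,
        ite_mul, zero_mul, one_mul, Finset.sum_ite_eq', Finset.mem_univ, if_true] at h
      simpa using h
    have hoff : ∀ (a : Fin N) (a0 c : A) (b b0 : B), b ≠ b0 →
        (∑ b1, Uᴴ b b1 * E a (Sum.inl (a0, b1)) (Sum.inl (c, b0))) = 0 := by
      intro a a0 c b b0 hne
      rw [hsingle a a0 c b b0, if_neg hne]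
    have hdiag : ∀ (a : Fin N) (a0 c : A) (b0 b1 : B),
        (∑ bb, Uᴴ b0 bb * E a (Sum.inl (a0, bb)) (Sum.inl (c, b0)))
          = ∑ bb, Uᴴ b1 bb * E a (Sum.inl (a0, bb)) (Sum.inl (c, b1)) := by
      intro a a0 c b0 b1
      by_cases hbb : b0 = b1
      · rw [hbb]
      -- work with χ = single b0 + single b1
      set χ2 : B → ℂ := Pi.single b0 1 + Pi.single b1 1 with hχ2
      have hsum2 : ∀ F : B → ℂ, ∑ b2, F b2 * χ2 b2 = F b0 + F b1 := by
        intro F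
        simp only [hχ2, Pi.add_apply, Pi.single_apply, mul_add, mul_ite, mul_one, mul_zero,
          Finset.sum_add_distrib, Finset.sum_ite_eq', Finset.mem_univ, if_true]
      have hstar2 : ∀ b, star (χ2 b) = χ2 b := by
        intro b
        simp [hχ2, Pi.single_apply, apply_ite (star : ℂ → ℂ)]
      have hsum2star : ∀ F : B → ℂ, ∑ b', star (χ2 b') * F b' = F b0 + F b1 := by
        intro F
        rw [show (∑ b', star (χ2 b') * F b') = ∑ b', F b' * χ2 b' from
          Finset.sum_congr rfl fun b' _ => by rw [hstar2]; ring]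
        exact hsum2 F
      have hχ2b0 : χ2 b0 = 1 := by
        simp [hχ2, Pi.single_apply, Ne.symm hbb]
      have hχ2b1 : χ2 b1 = 1 := by
        simp [hχ2, Pi.single_apply, hbb]
      have hdot2 : star χ2 ⬝ᵥ χ2 = 2 := by
        rw [show (star χ2 ⬝ᵥ χ2) = ∑ b', star (χ2 b') * χ2 b' from rfl]
        rw [hsum2star χ2, hχ2b0, hχ2b1]
        norm_num
      have h := hB χ2 a a0 c b0
      simp only [hdot2, hsum2, hsum2star, hχ2b0, hoff a a0 c b0 b1 hbb,
        hoff a a0 c b1 b0 (Ne.symm hbb)] at h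
      linear_combination h
    refine ⟨g, fun a => ?_, fun a => ?_⟩
    · -- invariance of the subspace
      ext i j
      cases j with
      | inr k => rw [mul_projAB_inr, mul_projAB_inr]
      | inl q =>
        rw [mul_projAB_inl, mul_projAB_inl]
        cases i with
        | inl p => rw [projAB_mul_inl]
        | inr k =>
          rw [projAB_mul_inr, oneTensor_mul_apply_inr, hA]
    · -- the restricted operator has the form X ⊗ 1
      rcases isEmpty_or_nonempty B with hB0 | hB0
      · refine ⟨0, ?_⟩
        ext ⟨a1, b1⟩ j
        exact (hB0.false b1).elim
      · obtain ⟨bs⟩ := hB0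
        refine ⟨Matrix.of (fun a0 c => ∑ b1, Uᴴ bs b1 * E a (Sum.inl (a0, b1)) (Sum.inl (c, bs))), ?_⟩
        ext ⟨a0, b⟩ ⟨c, b2⟩
        show (oneTensor Uᴴ * E a * projAB : Matrix ((A × B) ⊕ K) ((A × B) ⊕ K) ℂ)
            (Sum.inl (a0, b)) (Sum.inl (c, b2)) = _
        rw [mul_projAB_inl, oneTensor_mul_apply_inl]
        by_cases hbb : b = b2
        · subst hbb
          simp only [Matrix.kroneckerMap_apply, Matrix.one_apply_eq, mul_one, Matrix.of_apply]
          exact hdiag a a0 c b bs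
        · simp only [Matrix.kroneckerMap_apply, Matrix.one_apply_ne hbb, mul_zero]
          exact hoff a a0 c b b2 hbb
  · rintro ⟨g, hinv, hXex⟩
    choose X hX using hXex
    set U : Matrix B B ℂ := (π g : Matrix B B ℂ) with hUdef
    have hUr : U * Uᴴ = 1 := by
      have := Matrix.mem_unitaryGroup_iff.mp (π g).2
      simpa [Matrix.star_eq_conjTranspose] using this
    refine ⟨g, fun σA σB => ⟨∑ a, X a * σA * (X a)ᴴ, ?_⟩⟩
    rw [hE]
    have hEP : ∀ a : Fin N,
        E a * projAB = oneTensor U * embedAB (X a ⊗ₖ (1 : Matrix B B ℂ)) := by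
      intro a
      have h1 : oneTensor Uᴴ * E a * projAB = embedAB (X a ⊗ₖ (1 : Matrix B B ℂ)) := by
        ext i j
        cases j with
        | inr k =>
          rw [mul_projAB_inr]
          cases i <;> simp [embedAB]
        | inl q =>
          cases i with
          | inl p =>
            have h2 := congrFun (congrFun (hX a) p) q
            exact h2
          | inr k =>
            have h3 := congrFun (congrFun (hinv a) (Sum.inr k)) (Sum.inl q)
            rw [mul_projAB_inl, mul_projAB_inl, projAB_mul_inr] at h3
            rw [mul_projAB_inl, ← h3]
            simp [embedAB]
      calc E a * projAB
          = oneTensor U * (oneTensor Uᴴ * (E a * projAB)) := by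
            rw [← Matrix.mul_assoc, oneTensor_mul_oneTensor hUr, Matrix.one_mul]
        _ = oneTensor U * embedAB (X a ⊗ₖ (1 : Matrix B B ℂ)) := by
            rw [show oneTensor Uᴴ * (E a * projAB)
                = oneTensor Uᴴ * E a * projAB from (Matrix.mul_assoc _ _ _).symm, h1]
    have hmain : ∀ a : Fin N, E a * embedAB (σA ⊗ₖ σB) * (E a)ᴴ
        = embedAB ((X a * σA * (X a)ᴴ) ⊗ₖ (U * σB * Uᴴ)) := by
      intro a
      have hM : E a * embedAB (σA ⊗ₖ σB) * (E a)ᴴ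
          = (E a * projAB) * embedAB (σA ⊗ₖ σB) * (E a * projAB)ᴴ := by
        rw [Matrix.conjTranspose_mul, projAB_conjTranspose]
        conv_lhs => rw [← embedAB_mul_projAB (σA ⊗ₖ σB), ← projAB_mul_embedAB (σA ⊗ₖ σB)]
        simp only [Matrix.mul_assoc]
      rw [hM, hEP a]
      rw [Matrix.conjTranspose_mul, oneTensor_conjTranspose, embedAB_conjTranspose]
      calc oneTensor U * embedAB (X a ⊗ₖ (1 : Matrix B B ℂ)) * embedAB (σA ⊗ₖ σB) *
            (embedAB ((X a ⊗ₖ (1 : Matrix B B ℂ))ᴴ) * oneTensor Uᴴ)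
          = oneTensor U * embedAB ((X a ⊗ₖ (1 : Matrix B B ℂ)) * (σA ⊗ₖ σB) *
              (X a ⊗ₖ (1 : Matrix B B ℂ))ᴴ) * oneTensor Uᴴ := by
            rw [Matrix.mul_assoc (oneTensor U) (embedAB (X a ⊗ₖ (1 : Matrix B B ℂ))),
              embedAB_mul]
            rw [Matrix.mul_assoc (oneTensor U), ← Matrix.mul_assoc
              (embedAB (X a ⊗ₖ (1 : Matrix B B ℂ) * (σA ⊗ₖ σB))), embedAB_mul]
            simp only [Matrix.mul_assoc]
        _ = embedAB (((1 : Matrix A A ℂ) ⊗ₖ U) * ((X a ⊗ₖ (1 : Matrix B B ℂ)) * (σA ⊗ₖ σB) *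
              (X a ⊗ₖ (1 : Matrix B B ℂ))ᴴ) * ((1 : Matrix A A ℂ) ⊗ₖ Uᴴ)) := by
            rw [oneTensor_mul_embedAB, embedAB_mul_oneTensor]
        _ = embedAB ((X a * σA * (X a)ᴴ) ⊗ₖ (U * σB * Uᴴ)) := by
            congr 1
            rw [kronecker_conjTranspose', Matrix.conjTranspose_one]
            simp only [← Matrix.mul_kronecker_mul, Matrix.one_mul, Matrix.mul_one]
    calc ∑ a, E a * embedAB (σA ⊗ₖ σB) * (E a)ᴴ
        = ∑ a, embedAB ((X a * σA * (X a)ᴴ) ⊗ₖ (U * σB * Uᴴ)) :=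
          Finset.sum_congr rfl fun a _ => hmain a
      _ = embedAB ((∑ a, X a * σA * (X a)ᴴ) ⊗ₖ (U * σB * Uᴴ)) := by
          rw [embedAB_finset_sum, sum_kronecker']
end
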